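/- arXiv:1510.05842 — 5 statements merged into one kernel-verified Lean document; each statement's English description precedes it below -/
import Mathlib

section
/- Let V and E be finite types, let ι, τ : E → V and a, c : E → ℤ × ℤ be functions. Suppose there exists a family of additive homomorphisms χ_v : ℤ × ℤ → ℤ (one for each v ∈ V) such that for every e ∈ E one has χ_{ι(e)}(a(e)) = χ_{τ(e)}(c(e)) and this common value is nonzero. Then there exist functions x, y : V → ℤ × ℤ such that: (1) for every v ∈ V, det(x(v), y(v)) ≠ 0 (so x(v) and y(v) generate a finite-index subgroup of ℤ²), and (2) for every e ∈ E, |det(x(ι(e)), a(e))| + |det(y(ι(e)), a(e))| = |det(x(τ(e)), c(e))| + |det(y(τ(e)), c(e))|, where det((p,q),(r,s)) = p·s − q·r. -/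
/-- The determinant of the 2×2 integer matrix with columns `u` and `v`. -/
def det2 (u v : ℤ × ℤ) : ℤ := u.1 * v.2 - u.2 * v.1

/-- Combinatorial content of Theorem 2.4: a tubular group admitting a homomorphism to ℤ
nonzero on all edge groups has an equitable set (with two elements at each vertex). -/
theorem equitable_set_exists {V E : Type} [Fintype V] [Fintype E]
    (ι τ : E → V) (a c : E → ℤ × ℤ)
    (χ : V → (ℤ × ℤ →+ ℤ))
    (hcompat : ∀ e : E, χ (ι e) (a e) = χ (τ e) (c e))
    (hnonzero : ∀ e : E, χ (ι e) (a e) ≠ 0) :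
    ∃ x y : V → ℤ × ℤ,
      (∀ v : V, det2 (x v) (y v) ≠ 0) ∧
      (∀ e : E,
        |det2 (x (ι e)) (a e)| + |det2 (y (ι e)) (a e)| =
        |det2 (x (τ e)) (c e)| + |det2 (y (τ e)) (c e)|) := by
  classical
  have hχ : ∀ v (u : ℤ × ℤ), χ v u = χ v (1,0) * u.1 + χ v (0,1) * u.2 := by
    intro v u
    have hu : (u.1 • ((1:ℤ),(0:ℤ)) + u.2 • ((0:ℤ),(1:ℤ)) : ℤ × ℤ) = u := by
      ext <;> simp
    rw [← hu, map_add, map_zsmul, map_zsmul]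
    simp [smul_eq_mul]
    ring
  have hwι : ∀ e, ¬(χ (ι e) (1,0) = 0 ∧ χ (ι e) (0,1) = 0) := by
    intro e ⟨ha, hb⟩
    apply hnonzero e
    rw [hχ, ha, hb]
    ring
  have hwτ : ∀ e, ¬(χ (τ e) (1,0) = 0 ∧ χ (τ e) (0,1) = 0) := by
    intro e ⟨ha, hb⟩
    apply hnonzero e
    rw [hcompat e, hχ, ha, hb]
    ring
  set S : ℕ := ∑ e : E,
      ((χ (ι e) (1,0) * (a e).2 - χ (ι e) (0,1) * (a e).1).natAbs +
       (χ (τ e) (1,0) * (c e).2 - χ (τ e) (0,1) * (c e).1).natAbs) with hS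
  set N : ℤ := 1 + (S : ℤ) with hN
  have hNpos : 0 < N := by positivity
  have habs : ∀ m t : ℤ, |t| ≤ |m| → |m + t| + |m - t| = 2 * |m| := by
    intro m t h
    simp only [Int.abs_eq_natAbs] at *
    omega
  have key1 : ∀ v (u : ℤ × ℤ),
      det2 (N * χ v (0,1) + χ v (1,0), -(N * χ v (1,0)) + χ v (0,1)) u
        = N * χ v u + (χ v (1,0) * u.2 - χ v (0,1) * u.1) := by
    intro v u; rw [hχ v u]; simp only [det2]; ring
  have key2 : ∀ v (u : ℤ × ℤ),
      det2 (N * χ v (0,1) - χ v (1,0), -(N * χ v (1,0)) - χ v (0,1)) u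
        = N * χ v u - (χ v (1,0) * u.2 - χ v (0,1) * u.1) := by
    intro v u; rw [hχ v u]; simp only [det2]; ring
  refine ⟨fun v => if χ v (1,0) = 0 ∧ χ v (0,1) = 0 then (1,0) else
      (N * χ v (0,1) + χ v (1,0), -(N * χ v (1,0)) + χ v (0,1)),
    fun v => if χ v (1,0) = 0 ∧ χ v (0,1) = 0 then (0,1) else
      (N * χ v (0,1) - χ v (1,0), -(N * χ v (1,0)) - χ v (0,1)), ?_, ?_⟩
  · intro v
    by_cases h : χ v (1,0) = 0 ∧ χ v (0,1) = 0
    · simp [h, det2]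
    · simp only [h, if_false]
      have hd : det2 (N * χ v (0,1) + χ v (1,0), -(N * χ v (1,0)) + χ v (0,1))
          (N * χ v (0,1) - χ v (1,0), -(N * χ v (1,0)) - χ v (0,1))
          = -2 * N * (χ v (1,0) ^ 2 + χ v (0,1) ^ 2) := by
        simp only [det2]; ring
      rw [hd]
      have hne : χ v (1,0) ≠ 0 ∨ χ v (0,1) ≠ 0 := by
        by_contra hc
        push_neg at hc
        exact h ⟨hc.1, hc.2⟩
      have hsq : 0 < χ v (1,0) ^ 2 + χ v (0,1) ^ 2 := by
        rcases hne with h1 | h1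
        · have : 0 < χ v (1,0) ^ 2 := by positivity
          nlinarith [sq_nonneg (χ v (0,1))]
        · have : 0 < χ v (0,1) ^ 2 := by positivity
          nlinarith [sq_nonneg (χ v (1,0))]
      have : -2 * N * (χ v (1,0) ^ 2 + χ v (0,1) ^ 2) < 0 := by nlinarith
      exact ne_of_lt this
  · intro e
    have h1 := hwι e
    have h2 := hwτ e
    simp only [h1, h2, if_false]
    rw [key1, key2, key1, key2]
    have hb : ((χ (ι e) (1,0) * (a e).2 - χ (ι e) (0,1) * (a e).1).natAbs +
       (χ (τ e) (1,0) * (c e).2 - χ (τ e) (0,1) * (c e).1).natAbs) ≤ S :=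
      Finset.single_le_sum (f := fun e : E =>
        ((χ (ι e) (1,0) * (a e).2 - χ (ι e) (0,1) * (a e).1).natAbs +
         (χ (τ e) (1,0) * (c e).2 - χ (τ e) (0,1) * (c e).1).natAbs))
        (fun i _ => Nat.zero_le _) (Finset.mem_univ e)
    have hb' : ((χ (ι e) (1,0) * (a e).2 - χ (ι e) (0,1) * (a e).1).natAbs : ℤ) +
        ((χ (τ e) (1,0) * (c e).2 - χ (τ e) (0,1) * (c e).1).natAbs : ℤ) ≤ (S : ℤ) := by
      exact_mod_cast hb
    have hs : χ (ι e) (a e) ≠ 0 := hnonzero e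
    have hs1 : 1 ≤ |χ (ι e) (a e)| := Int.one_le_abs hs
    have hNm : N ≤ |N * χ (ι e) (a e)| := by
      rw [abs_mul, abs_of_pos hNpos]
      nlinarith
    have ht1 : |χ (ι e) (1,0) * (a e).2 - χ (ι e) (0,1) * (a e).1| ≤ N := by
      rw [Int.abs_eq_natAbs, hN]
      omega
    have ht2 : |χ (τ e) (1,0) * (c e).2 - χ (τ e) (0,1) * (c e).1| ≤ N := by
      rw [Int.abs_eq_natAbs, hN]
      omega
    rw [habs _ _ (le_trans ht1 hNm), hcompat e]
    have hNm' : N ≤ |N * χ (τ e) (c e)| := by rw [← hcompat e]; exact hNm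
    rw [habs _ _ (le_trans ht2 hNm')]
end

section
/- Let G be a group and χ : G →* Multiplicative ℤ a group homomorphism whose kernel is isomorphic to a free group of finite rank. Let x, y ∈ G satisfy χ(x) = χ(y) ≠ 1. Let A = ⟨x⟩ and B = ⟨y⟩ be the cyclic subgroups generated by x and y (both infinite cyclic since χ(x) ≠ 1), and let φ : A ≃* B be the isomorphism sending x to y. Then there exists a homomorphism χ' from the HNN extension HNNExtension G A B φ to Multiplicative ℤ such that χ' composed with the canonical map G → HNNExtension G A B φ equals χ, and the kernel of χ' is isomorphic to a free group of finite rank. -/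
namespace HnnAux

variable {α : Type*} [DecidableEq α]

/-- reduced words (fixed points of `reduce`) have no adjacent cancelling pair -/
theorem chain'_of_reduce_eq_self : ∀ {L : List (α × Bool)}, FreeGroup.reduce L = L →
    L.Chain' (fun p q => p.1 = q.1 → p.2 = q.2)
  | [], _ => List.isChain_nil
  | [p], _ => List.isChain_singleton p
  | a :: b :: L, h => by
    have hred : FreeGroup.reduce (a :: b :: L) = a :: b :: L := h
    rw [FreeGroup.reduce.cons] at hred
    rcases hr : FreeGroup.reduce (b :: L) with _ | ⟨hd, tl⟩
    · rw [hr] at hred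
      simp at hred
    · rw [hr] at hred
      dsimp only at hred
      by_cases hc : a.1 = hd.1 ∧ a.2 = !hd.2
      · rw [if_pos hc] at hred
        exfalso
        have h1 : (FreeGroup.reduce (b :: L)).length ≤ (b :: L).length :=
          FreeGroup.Red.length_le (FreeGroup.reduce.red)
        rw [hr] at h1
        have := congrArg List.length hred
        simp at this h1
        omega
      · rw [if_neg hc] at hred
        obtain ⟨rfl, rfl⟩ : hd = b ∧ tl = L := by
          injection hred with h2a h2b
          injection h2b with h2c h2d
          exact ⟨h2c, h2d⟩
        refine List.isChain_cons_cons.2 ⟨?_, chain'_of_reduce_eq_self (hr ▸ hr)⟩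
        intro h1
        by_contra h2
        exact hc ⟨h1, by revert h2; cases a.2 <;> cases hd.2 <;> simp_all⟩

/-- words with no adjacent cancelling pair are fixed by `reduce` -/
theorem reduce_eq_self_of_chain' : ∀ {L : List (α × Bool)},
    L.Chain' (fun p q => p.1 = q.1 → p.2 = q.2) → FreeGroup.reduce L = L
  | [], _ => rfl
  | a :: L, h => by
    have htl := reduce_eq_self_of_chain' (List.isChain_cons.1 h).2
    rw [FreeGroup.reduce.cons, htl]
    cases L with
    | nil => rfl
    | cons b L =>
      have hab := (List.isChain_cons_cons.1 h).1
      have : ¬ (a.1 = b.1 ∧ a.2 = !b.2) := by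
        rintro ⟨h1, h2⟩
        have := hab h1
        rw [this] at h2
        exact (Bool.not_ne_self b.2 h2.symm).elim
      simp only [this, if_false]

theorem mk_ne_one {L : List (α × Bool)} (hL : L ≠ [])
    (h : L.Chain' (fun p q => p.1 = q.1 → p.2 = q.2)) : FreeGroup.mk L ≠ 1 := by
  intro h1
  have := congrArg FreeGroup.toWord h1
  rw [FreeGroup.toWord_mk, FreeGroup.toWord_one, reduce_eq_self_of_chain' h] at this
  exact hL this


open HNNExtension

variable {G : Type*} [Group G] {A B : Subgroup G} {φ : A ≃* B}
variable {β : Type*} [DecidableEq β]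

/-- a letter of the `K`-alphabet as an element of `G` -/
def fGn (kB : α → G) (p : α × Bool) : G := cond p.2 (kB p.1) (kB p.1)⁻¹

def uu (b : Bool) : ℤˣ := cond b 1 (-1)

/-- the images of the generators in the HNN extension -/
def bbH (φ : A ≃* B) (kB : α → G) (gg : β → G) : (α ⊕ β) → HNNExtension G A B φ :=
  Sum.elim (fun a => of (kB a)) fun i => of (gg i) * t * (of (gg i))⁻¹

/-- convert a word in the free generators to an HNN `ReducedWord` presentation -/
def conv (kB : α → G) (gg : β → G) : List ((α ⊕ β) × Bool) → G × List (ℤˣ × G)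
  | [] => (1, [])
  | (Sum.inl a, b) :: L => ((cond b (kB a) (kB a)⁻¹) * (conv kB gg L).1, (conv kB gg L).2)
  | (Sum.inr i, b) :: L =>
      (gg i, (uu b, (gg i)⁻¹ * (conv kB gg L).1) :: (conv kB gg L).2)

theorem conv_spec (kB : α → G) (gg : β → G) (KK : Subgroup G) (hkB : ∀ a, kB a ∈ KK)
    (hkprod : ∀ L₀ : List (α × Bool), L₀ ≠ [] →
      L₀.Chain' (fun p q => p.1 = q.1 → p.2 = q.2) → (L₀.map (fGn kB)).prod ≠ 1)
    (hpinch : ∀ (i j : β) (κ : G), κ ∈ KK → ∀ u : ℤˣ,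
      (gg i)⁻¹ * (κ * gg j) ∈ toSubgroup A B u → i = j ∧ κ = 1) :
    ∀ L : List ((α ⊕ β) × Bool), L.Chain' (fun p q => p.1 = q.1 → p.2 = q.2) →
    (of (conv kB gg L).1 *
        (((conv kB gg L).2).map (fun p => (t : HNNExtension G A B φ) ^ (p.1 : ℤ) * of p.2)).prod
      = (L.map (fun p => cond p.2 (bbH φ kB gg p.1) (bbH φ kB gg p.1)⁻¹)).prod)
    ∧ ((conv kB gg L).2.Chain' (fun a b => a.2 ∈ toSubgroup A B a.1 → a.1 = b.1))
    ∧ ((∃ L₀ : List (α × Bool), L = L₀.map (fun q => (Sum.inl q.1, q.2))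
          ∧ (conv kB gg L).1 = (L₀.map (fGn kB)).prod ∧ (conv kB gg L).2 = [])
      ∨ (∃ (L₀ : List (α × Bool)) (j : β) (b1 : Bool) (L' : List ((α ⊕ β) × Bool)),
          L = L₀.map (fun q => (Sum.inl q.1, q.2)) ++ (Sum.inr j, b1) :: L'
          ∧ (conv kB gg L).1 = (L₀.map (fGn kB)).prod * gg j
          ∧ ∃ c rest, (conv kB gg L).2 = (uu b1, c) :: rest)) := by
  intro L
  induction L with
  | nil =>
    intro _
    refine ⟨by simp [conv], by simp [conv]; exact List.isChain_nil, Or.inl ⟨[], by simp [conv]⟩⟩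
  | cons p L ih =>
    intro hch
    obtain ⟨hpL, hchL⟩ := List.isChain_cons.1 hch
    obtain ⟨ihprod, ihchain, ihinv⟩ := ih hchL
    obtain ⟨s, b⟩ := p
    cases s with
    | inl a =>
      refine ⟨?_, ?_, ?_⟩
      · show of (cond b (kB a) (kB a)⁻¹ * (conv kB gg L).1) *
            (((conv kB gg L).2).map
              (fun p => (t : HNNExtension G A B φ) ^ (p.1 : ℤ) * of p.2)).prod = _
        rw [map_mul, List.map_cons, List.prod_cons, ← ihprod]
        cases b <;> simp [bbH, mul_assoc]
      · exact ihchain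
      · rcases ihinv with ⟨L₀, hL, hhead, htl⟩ | ⟨L₀, j, b1, L', hL, hhead, c, rest, htl⟩
        · refine Or.inl ⟨(a, b) :: L₀, by simp [hL], ?_, by simpa [conv] using htl⟩
          show cond b (kB a) (kB a)⁻¹ * (conv kB gg L).1 = _
          rw [hhead]; simp [fGn]
        · refine Or.inr ⟨(a, b) :: L₀, j, b1, L', by simp [hL], ?_, c, rest,
            by simpa [conv] using htl⟩
          show cond b (kB a) (kB a)⁻¹ * (conv kB gg L).1 = _
          rw [hhead]; simp [fGn, mul_assoc]
    | inr i =>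
      have hKmem : ∀ L₀ : List (α × Bool), (L₀.map (fGn kB)).prod ∈ KK := by
        intro L₀
        induction L₀ with
        | nil => simpa using one_mem KK
        | cons q L₀ ih =>
          rw [List.map_cons, List.prod_cons]
          exact mul_mem (by rcases q with ⟨a', b'⟩; cases b' <;>
            simp [fGn, hkB, inv_mem_iff]) ih
      refine ⟨?_, ?_, ?_⟩
      · show of (gg i) * ((((uu b, (gg i)⁻¹ * (conv kB gg L).1) :: (conv kB gg L).2).map
            (fun p => (t : HNNExtension G A B φ) ^ (p.1 : ℤ) * of p.2)).prod) = _
        rw [List.map_cons, List.prod_cons, List.map_cons, List.prod_cons, ← ihprod]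
        cases b <;> simp [bbH, uu, mul_assoc, map_mul, zpow_neg_one]
      · show List.Chain' _ ((uu b, (gg i)⁻¹ * (conv kB gg L).1) :: (conv kB gg L).2)
        refine List.isChain_cons.2 ⟨?_, ihchain⟩
        rintro ⟨u', c'⟩ hd' hmem
        rcases ihinv with ⟨L₀, hL, hhead, htl⟩ | ⟨L₀, j, b1, L', hL, hhead, c, rest, htl⟩
        · rw [htl] at hd'; simp at hd'
        · rw [htl] at hd'
          simp only [List.head?_cons, Option.mem_def, Option.some.injEq] at hd'
          obtain ⟨hu, -⟩ := Prod.mk.inj hd'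
          dsimp only at hmem ⊢
          rw [hhead] at hmem
          obtain ⟨hij, hk1⟩ := hpinch i j _ (hKmem L₀) _ hmem
          subst hij
          have hL₀nil : L₀ = [] := by
            by_contra hne
            refine hkprod L₀ hne ?_ hk1
            have : (L₀.map (fun q => ((Sum.inl q.1 : α ⊕ β), q.2))).Chain'
                (fun p q => p.1 = q.1 → p.2 = q.2) := by
              rw [hL] at hchL
              exact hchL.left_of_append
            simp only [List.Chain', List.isChain_map] at this
            exact this.imp (fun p q h hpq => h (by simp [hpq]))
          subst hL₀nil
          simp only [List.map_nil, List.nil_append] at hL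
          have hb : b = b1 := by
            have := hpL (Sum.inr i, b1) (by rw [hL]; rfl)
            exact this rfl
          rw [← hu, hb]
      · refine Or.inr ⟨[], i, b, L, by simp, by simp [conv], _, _, rfl⟩

theorem master (kB : α → G) (gg : β → G) (KK : Subgroup G) (hkB : ∀ a, kB a ∈ KK)
    (hkprod : ∀ L₀ : List (α × Bool), L₀ ≠ [] →
      L₀.Chain' (fun p q => p.1 = q.1 → p.2 = q.2) → (L₀.map (fGn kB)).prod ≠ 1)
    (hpinch : ∀ (i j : β) (κ : G), κ ∈ KK → ∀ u : ℤˣ,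
      (gg i)⁻¹ * (κ * gg j) ∈ toSubgroup A B u → i = j ∧ κ = 1) :
    Function.Injective (FreeGroup.lift (bbH φ kB gg)) := by
  rw [injective_iff_map_eq_one]
  intro w hw
  by_contra hw1
  set L := w.toWord with hLdef
  have hL : L ≠ [] := fun h => hw1 (FreeGroup.toWord_eq_nil_iff.1 h)
  have hch : L.Chain' (fun p q => p.1 = q.1 → p.2 = q.2) :=
    chain'_of_reduce_eq_self (FreeGroup.reduce_toWord w)
  have hprod : (L.map (fun p => cond p.2 (bbH φ kB gg p.1) (bbH φ kB gg p.1)⁻¹)).prod = 1 := by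
    rw [← FreeGroup.lift_mk]
    rw [show FreeGroup.mk L = w from FreeGroup.mk_toWord]
    exact hw
  obtain ⟨hprodEq, hchain, hinv⟩ := conv_spec (φ := φ) kB gg KK hkB hkprod hpinch L hch
  rcases hinv with ⟨L₀, hLeq, hhead, htl⟩ | ⟨L₀, j, b1, L', hLeq, hhead, c, rest, htl⟩
  · have hL₀ : L₀ ≠ [] := by rintro rfl; simp at hLeq; exact hL hLeq
    have hch₀ : L₀.Chain' (fun p q => p.1 = q.1 → p.2 = q.2) := by
      rw [hLeq] at hch; simp only [List.Chain', List.isChain_map] at hch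
      exact hch.imp (fun p q h hpq => h (by simp [hpq]))
    refine hkprod L₀ hL₀ hch₀ ?_
    have : (of ((L₀.map (fGn kB)).prod) : HNNExtension G A B φ) = 1 := by
      rw [← hhead]
      have := hprodEq
      rw [htl] at this
      simpa [hprod] using this
    have h1 : (of ((L₀.map (fGn kB)).prod) : HNNExtension G A B φ) = of 1 := by simpa using this
    exact HNNExtension.of_injective φ h1
  · have hWprod : (HNNExtension.NormalWord.ReducedWord.prod φ ⟨(conv kB gg L).1, (conv kB gg L).2, hchain⟩) = 1 := by
      show of (conv kB gg L).1 * _ = 1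
      rw [hprodEq, hprod]
    have h2 := HNNExtension.ReducedWord.toList_eq_nil_of_mem_of_range φ
      ⟨(conv kB gg L).1, (conv kB gg L).2, hchain⟩ (by rw [hWprod]; exact ⟨1, map_one _⟩)
    have h3 : (conv kB gg L).2 = [] := h2
    rw [htl] at h3
    simp at h3

end HnnAux

open HNNExtension in
/-- The HNN-extension step in Theorem 2.1: an HNN extension of a (finite rank free)-by-ℤ
group identifying two infinite cyclic subgroups whose generators have equal nonzero image
under the homomorphism to ℤ is again (finite rank free)-by-ℤ. -/
theorem hnn_free_by_Z {G : Type} [Group G] (χ : G →* Multiplicative ℤ)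
    (hker : ∃ n : ℕ, Nonempty (χ.ker ≃* FreeGroup (Fin n)))
    (x y : G) (hxy : χ x = χ y) (hx : χ x ≠ 1)
    (φ : (Subgroup.zpowers x) ≃* (Subgroup.zpowers y))
    (hφ : (φ ⟨x, Subgroup.mem_zpowers x⟩ : G) = y) :
    ∃ χ' : HNNExtension G (Subgroup.zpowers x) (Subgroup.zpowers y) φ →* Multiplicative ℤ,
      χ'.comp HNNExtension.of = χ ∧
      ∃ n : ℕ, Nonempty (χ'.ker ≃* FreeGroup (Fin n)) := by
  classical
  obtain ⟨n, ⟨e⟩⟩ := hker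
  set m : ℤ := Multiplicative.toAdd (χ x) with hm
  have hm0 : m ≠ 0 := fun h => hx (by
    have : χ x = Multiplicative.ofAdd 0 := by rw [← h]; rfl
    simpa using this)
  -- the power law for φ
  have hφpow : ∀ s : ℤ, ((φ (⟨x, Subgroup.mem_zpowers x⟩ ^ s) : Subgroup.zpowers y) : G)
      = y ^ s := by
    intro s
    rw [map_zpow]
    rw [SubgroupClass.coe_zpow, hφ]
  have hχφ : ∀ a : Subgroup.zpowers x, χ (a : G) = χ ((φ a : Subgroup.zpowers y) : G) := by
    intro a
    obtain ⟨s, hs⟩ := Subgroup.mem_zpowers_iff.1 a.2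
    have ha : a = ⟨x, Subgroup.mem_zpowers x⟩ ^ s := by
      ext; rw [SubgroupClass.coe_zpow]; exact hs.symm
    subst ha
    rw [hφpow, SubgroupClass.coe_zpow]
    simp only [map_zpow, hxy]
  -- the homomorphism χ'
  have hχφ' : ∀ a : Subgroup.zpowers x,
      (1 : Multiplicative ℤ) * χ (a : G) = χ ((φ a : Subgroup.zpowers y) : G) * 1 :=
    fun a => by rw [one_mul, mul_one, hχφ a]
  set χ' := HNNExtension.lift χ 1 hχφ' with hχ'
  refine ⟨χ', MonoidHom.ext fun g => HNNExtension.lift_of χ 1 hχφ' g, ?_⟩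
  have hχ'of : ∀ g : G, χ' (of g) = χ g := fun g => HNNExtension.lift_of χ 1 hχφ' g
  have hχ't : χ' t = 1 := HNNExtension.lift_t χ 1 hχφ'
  -- the image subgroup of ℤ
  set S : AddSubgroup ℤ :=
    { carrier := Set.range (fun g => Multiplicative.toAdd (χ g))
      zero_mem' := ⟨1, by simp⟩
      add_mem' := by rintro _ _ ⟨g1, rfl⟩ ⟨g2, rfl⟩; exact ⟨g1 * g2, by simp⟩
      neg_mem' := by rintro _ ⟨g, rfl⟩; exact ⟨g⁻¹, by simp⟩ } with hSdef
  obtain ⟨d0, hS⟩ := Int.subgroup_cyclic S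
  have hSmem : ∀ z : ℤ, z ∈ S ↔ d0 ∣ z := by
    intro z
    rw [hS, AddSubgroup.mem_closure_singleton]
    constructor
    · rintro ⟨k, rfl⟩; exact ⟨k, by rw [smul_eq_mul, mul_comm]⟩
    · rintro ⟨k, rfl⟩; exact ⟨k, by rw [smul_eq_mul, mul_comm]⟩
  have hmS : m ∈ S := ⟨x, rfl⟩
  have hd0 : d0 ≠ 0 := by
    rintro rfl
    rw [hSmem] at hmS
    exact hm0 (zero_dvd_iff.1 hmS)
  set d : ℤ := |d0| with hd
  have hdpos : 0 < d := abs_pos.2 hd0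
  have hdS : d ∈ S := by
    rcases abs_choice d0 with h | h
    · rw [hd, h]; exact hmS.elim (fun _ _ => by rw [hS] at *; exact AddSubgroup.mem_closure_singleton.2 ⟨1, one_smul _ _⟩)
    · rw [hd, h]; rw [hS]; exact AddSubgroup.mem_closure_singleton.2 ⟨-1, by simp⟩
  obtain ⟨gd, hgd⟩ : ∃ g : G, Multiplicative.toAdd (χ g) = d := hdS
  have hdvd : ∀ g : G, d ∣ Multiplicative.toAdd (χ g) := by
    intro g
    rw [hd, abs_dvd]
    exact (hSmem _).1 ⟨g, rfl⟩
  obtain ⟨md, hmd⟩ : d ∣ m := hdvd x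
  have hmd0 : md ≠ 0 := fun h => hm0 (by rw [hmd, h, mul_zero])
  set e' : ℕ := md.natAbs with he'def
  have he' : 0 < e' := Int.natAbs_pos.2 hmd0
  -- generators
  set gg : Fin e' → G := fun i => gd ^ (i : ℤ) with hgg
  set kB : Fin n → G := fun a => ((e.symm (FreeGroup.of a) : χ.ker) : G) with hkBdef
  have hχgg : ∀ i : Fin e', Multiplicative.toAdd (χ (gg i)) = (i : ℤ) * d := by
    intro i
    rw [hgg]
    simp only [map_zpow, toAdd_zpow, hgd, smul_eq_mul]
  have hkBK : ∀ a, kB a ∈ χ.ker := fun a => (e.symm (FreeGroup.of a)).2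
  -- the pinch lemma
  have hmemXY : ∀ (u : ℤˣ) (w : G),
      w ∈ toSubgroup (Subgroup.zpowers x) (Subgroup.zpowers y) u →
      ∃ s : ℤ, w = x ^ s ∨ w = y ^ s := by
    intro u w hw
    rcases Int.units_eq_one_or u with rfl | rfl
    · rw [toSubgroup_one] at hw
      obtain ⟨s, hs⟩ := Subgroup.mem_zpowers_iff.1 hw
      exact ⟨s, Or.inl hs.symm⟩
    · rw [toSubgroup_neg_one] at hw
      obtain ⟨s, hs⟩ := Subgroup.mem_zpowers_iff.1 hw
      exact ⟨s, Or.inr hs.symm⟩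
  have hχxs : ∀ s : ℤ, Multiplicative.toAdd (χ (x ^ s)) = s * m := by
    intro s; simp [toAdd_zpow, hm]
  have hχys : ∀ s : ℤ, Multiplicative.toAdd (χ (y ^ s)) = s * m := by
    intro s; simp [toAdd_zpow, hm, ← hxy]
  have hpinch : ∀ (i j : Fin e') (κ : G), κ ∈ χ.ker → ∀ u : ℤˣ,
      (gg i)⁻¹ * (κ * gg j) ∈ toSubgroup (Subgroup.zpowers x) (Subgroup.zpowers y) u →
      i = j ∧ κ = 1 := by
    intro i j κ hκ u hmem
    obtain ⟨s, hw⟩ := hmemXY u _ hmem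
    have hκ1 : Multiplicative.toAdd (χ κ) = 0 := by
      rw [MonoidHom.mem_ker] at hκ; rw [hκ]; rfl
    have hval : Multiplicative.toAdd (χ ((gg i)⁻¹ * (κ * gg j))) = (j : ℤ) * d - (i : ℤ) * d := by
      simp [map_mul, map_inv, toAdd_mul, toAdd_inv, hχgg, hκ1]
      ring
    have hsm : (j : ℤ) * d - (i : ℤ) * d = s * m := by
      rcases hw with hw | hw <;> rw [← hval, hw] <;> [exact hχxs s; exact hχys s]
    have hsmd : (j : ℤ) - (i : ℤ) = s * md := by
      have : ((j : ℤ) - (i : ℤ)) * d = (s * md) * d := by rw [hmd] at hsm; ring_nf; ring_nf at hsm; linarith [hsm]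
      exact mul_right_cancel₀ (ne_of_gt hdpos) this
    have hibound : (i : ℤ) < e' := by exact_mod_cast i.2
    have hjbound : (j : ℤ) < e' := by exact_mod_cast j.2
    have hinneg : (0:ℤ) ≤ (i : ℤ) := Int.natCast_nonneg _
    have hjnneg : (0:ℤ) ≤ (j : ℤ) := Int.natCast_nonneg _
    have hmdabs : (e' : ℤ) = |md| := by rw [he'def]; exact (Int.abs_eq_natAbs md).symm
    have hs0 : s = 0 := by
      by_contra hs
      have h1 : |(j : ℤ) - (i : ℤ)| < |md| := by rw [← hmdabs]; rw [abs_lt]; omega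
      have h2 : |s * md| ≥ |md| := by
        rw [abs_mul]
        calc |md| = 1 * |md| := (one_mul _).symm
        _ ≤ |s| * |md| := by
            apply mul_le_mul_of_nonneg_right _ (abs_nonneg md)
            exact Int.one_le_abs (by omega)
      rw [hsmd] at h1; omega
    have hij : i = j := by
      rw [hs0, zero_mul] at hsmd
      have : (i : ℤ) = (j : ℤ) := by omega
      exact Fin.ext (by exact_mod_cast this)
    subst hij
    refine ⟨rfl, ?_⟩
    have hw1 : (gg i)⁻¹ * (κ * gg i) = 1 := by
      rcases hw with hw | hw <;> rw [hw, hs0, zpow_zero]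
    have := congrArg (fun w => gg i * w * (gg i)⁻¹) hw1
    simpa [mul_assoc] using this
  -- products of K-letters
  have hkey : ∀ L₀ : List (Fin n × Bool),
      (L₀.map (HnnAux.fGn kB)).prod = χ.ker.subtype (e.symm (FreeGroup.mk L₀)) := by
    have h1 : χ.ker.subtype.comp e.symm.toMonoidHom = FreeGroup.lift kB :=
      FreeGroup.ext_hom _ _ (fun a => by simp [hkBdef])
    intro L₀
    have h2 : χ.ker.subtype (e.symm (FreeGroup.mk L₀))
        = (χ.ker.subtype.comp e.symm.toMonoidHom) (FreeGroup.mk L₀) := rfl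
    rw [h2, h1, FreeGroup.lift_mk]
    rfl
  have hkprod : ∀ L₀ : List (Fin n × Bool), L₀ ≠ [] →
      L₀.Chain' (fun p q => p.1 = q.1 → p.2 = q.2) → (L₀.map (HnnAux.fGn kB)).prod ≠ 1 := by
    intro L₀ h0 hch hone
    rw [hkey] at hone
    have h1 : e.symm (FreeGroup.mk L₀) = 1 := by
      have := Subtype.ext (p := fun g => g ∈ χ.ker) (a1 := e.symm (FreeGroup.mk L₀)) (a2 := 1) hone
      exact this
    have h2 : FreeGroup.mk L₀ = 1 := by
      have := congrArg e h1
      rwa [MulEquiv.apply_symm_apply, map_one] at this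
    exact HnnAux.mk_ne_one h0 hch h2
  -- the free group map
  set Ψ := FreeGroup.lift (HnnAux.bbH φ kB gg) with hΨ
  have hinj : Function.Injective Ψ :=
    HnnAux.master kB gg χ.ker hkBK hkprod hpinch
  set M := Ψ.range with hM
  have hτmem : ∀ i : Fin e', of (gg i) * t * (of (gg i))⁻¹ ∈ M :=
    fun i => ⟨FreeGroup.of (Sum.inr i), by rw [hΨ, FreeGroup.lift_apply_of]; rfl⟩
  have hofK : ∀ k : G, k ∈ χ.ker → of k ∈ M := by
    have hcomp2 : (HNNExtension.of (φ := φ)).comp (χ.ker.subtype.comp e.symm.toMonoidHom)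
        = Ψ.comp (FreeGroup.map Sum.inl) :=
      FreeGroup.ext_hom _ _ (by
        intro a
        simp only [MonoidHom.comp_apply, MulEquiv.coe_toMonoidHom, FreeGroup.map.of]
        rw [hΨ, FreeGroup.lift_apply_of]
        rfl)
    intro k hk
    have h1 : of k = (HNNExtension.of (φ := φ)).comp
        (χ.ker.subtype.comp e.symm.toMonoidHom) (e ⟨k, hk⟩) := by
      simp only [MonoidHom.comp_apply, MulEquiv.coe_toMonoidHom, MulEquiv.symm_apply_apply]
      rfl
    rw [h1, hcomp2]
    exact ⟨FreeGroup.map Sum.inl (e ⟨k, hk⟩), rfl⟩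
  have htmem : (t : HNNExtension G (Subgroup.zpowers x) (Subgroup.zpowers y) φ) ∈ M := by
    have h0 : gg ⟨0, he'⟩ = 1 := by
      rw [hgg]; norm_num
    have := hτmem ⟨0, he'⟩
    rwa [h0, map_one, one_mul, inv_one, mul_one] at this
  -- kernel membership from additive value
  have hker0 : ∀ g : G, Multiplicative.toAdd (χ g) = 0 → g ∈ χ.ker := by
    intro g hg
    rw [MonoidHom.mem_ker]
    have h1 : χ g = Multiplicative.ofAdd (Multiplicative.toAdd (χ g)) := rfl
    rw [h1, hg]; rfl
  -- decomposition of an arbitrary element of G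
  have hdecomp : ∀ bG : G, ∃ (κ : G) (i : Fin e') (jj : ℤ),
      κ ∈ χ.ker ∧ bG = κ * gg i * x ^ jj := by
    intro bG
    obtain ⟨z, hz⟩ := hdvd bG
    set iv := z % (e' : ℤ) with hiv
    have h0le : 0 ≤ iv := Int.emod_nonneg z (by exact_mod_cast he'.ne')
    have hlt : iv < (e' : ℤ) := Int.emod_lt_of_pos z (by exact_mod_cast he')
    refine ⟨bG * x ^ (-((z - iv) / md)) * (gg ⟨iv.toNat, by omega⟩)⁻¹,
      ⟨iv.toNat, by omega⟩, (z - iv) / md, ?_, by group⟩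
    have hicast : ((⟨iv.toNat, by omega⟩ : Fin e') : ℤ) = iv := by
      simp only [Fin.val_mk]; omega
    have hdvd2 : md ∣ (z - iv) := by
      have h3 : (e' : ℤ) ∣ (z - iv) := by
        have h4 : z - z % (e' : ℤ) = (e' : ℤ) * (z / (e' : ℤ)) := by
          rw [Int.emod_def]; ring
        rw [hiv, h4]
        exact Dvd.intro _ rfl
      rw [he'def] at h3
      exact Int.natAbs_dvd.1 h3
    have hjjmul : md * ((z - iv) / md) = z - iv := Int.mul_ediv_cancel' hdvd2
    apply hker0
    simp only [map_mul, map_inv, toAdd_mul, toAdd_inv, hχxs, hχgg, hicast, hz, hmd]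
    linear_combination (-d) * hjjmul
  -- conjugates of t by elements of G lie in M
  have hbt : ∀ bG : G, of bG * t * (of bG)⁻¹ ∈ M := by
    intro bG
    obtain ⟨κ, i, jj, hκ, rfl⟩ := hdecomp bG
    have hty : t * of (x ^ (-jj)) * t⁻¹
        = (of (y ^ (-jj)) : HNNExtension G (Subgroup.zpowers x) (Subgroup.zpowers y) φ) := by
      have h1 := HNNExtension.equiv_eq_conj (φ := φ) (⟨x, Subgroup.mem_zpowers x⟩ ^ (-jj))
      rw [hφpow, SubgroupClass.coe_zpow] at h1
      exact h1.symm
    have h3 : (t : HNNExtension G (Subgroup.zpowers x) (Subgroup.zpowers y) φ) * of (x ^ (-jj))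
        = of (y ^ (-jj)) * t := by
      calc (t : HNNExtension G (Subgroup.zpowers x) (Subgroup.zpowers y) φ) * of (x ^ (-jj))
          = (t * of (x ^ (-jj)) * t⁻¹) * t := by group
      _ = of (y ^ (-jj)) * t := by rw [hty]
    have hconjk : gg i * (x ^ jj * y ^ (-jj)) * (gg i)⁻¹ ∈ χ.ker := by
      apply hker0
      simp only [map_mul, map_inv, toAdd_mul, toAdd_inv, hχxs, hχys, hχgg]
      ring
    have hmain : (of (κ * gg i * x ^ jj) : HNNExtension G (Subgroup.zpowers x)
          (Subgroup.zpowers y) φ) * t * (of (κ * gg i * x ^ jj))⁻¹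
        = of κ * of (gg i) * (of (x ^ jj) * (t * of (x ^ (-jj)))) * (of (gg i))⁻¹ * (of κ)⁻¹ := by
      simp only [map_mul, map_inv, map_zpow]
      group
    rw [h3] at hmain
    have hmain2 : (of κ : HNNExtension G (Subgroup.zpowers x) (Subgroup.zpowers y) φ)
          * of (gg i) * (of (x ^ jj) * (of (y ^ (-jj)) * t)) * (of (gg i))⁻¹ * (of κ)⁻¹
        = of (κ * (gg i * (x ^ jj * y ^ (-jj)) * (gg i)⁻¹))
          * ((of (gg i) * t * (of (gg i))⁻¹) * (of κ)⁻¹) := by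
      simp only [map_mul, map_inv, map_zpow]
      group
    rw [hmain, hmain2]
    exact mul_mem (hofK _ (mul_mem hκ hconjk)) (mul_mem (hτmem i) (inv_mem (hofK κ hκ)))
  -- conjugation by elements of G preserves M
  haveI hkerNormal : (χ.ker).Normal := MonoidHom.normal_ker χ
  have hGconj : ∀ (gq : G) (w : HNNExtension G (Subgroup.zpowers x) (Subgroup.zpowers y) φ),
      w ∈ M → of gq * w * (of gq)⁻¹ ∈ M := by
    intro gq w hw
    obtain ⟨v, rfl⟩ := hw
    have hcomp3 : (MulAut.conj (of gq)).toMonoidHom.comp Ψ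
        = FreeGroup.lift (fun s => of gq * HnnAux.bbH φ kB gg s * (of gq)⁻¹) := by
      apply FreeGroup.ext_hom
      intro a
      rw [MonoidHom.comp_apply, hΨ, FreeGroup.lift_apply_of, FreeGroup.lift_apply_of]
      rfl
    have h4 : of gq * Ψ v * (of gq)⁻¹ = ((MulAut.conj (of gq)).toMonoidHom.comp Ψ) v := rfl
    rw [h4, hcomp3]
    have h5 : (FreeGroup.lift
        (fun s => of gq * HnnAux.bbH φ kB gg s * (of gq)⁻¹)).range ≤ M := by
      apply FreeGroup.range_lift_le
      rintro w' ⟨s, rfl⟩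
      rcases s with a | i
      · show of gq * HnnAux.bbH φ kB gg (Sum.inl a) * (of gq)⁻¹ ∈ M
        have hba : HnnAux.bbH φ kB gg (Sum.inl a) = of (kB a) := rfl
        rw [hba, ← map_inv, ← map_mul, ← map_mul]
        exact hofK _ (hkerNormal.conj_mem _ (hkBK a) gq)
      · show of gq * HnnAux.bbH φ kB gg (Sum.inr i) * (of gq)⁻¹ ∈ M
        have hbi : HnnAux.bbH φ kB gg (Sum.inr i) = of (gg i) * t * (of (gg i))⁻¹ := rfl
        have h6 : (of gq : HNNExtension G (Subgroup.zpowers x) (Subgroup.zpowers y) φ)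
              * (of (gg i) * t * (of (gg i))⁻¹) * (of gq)⁻¹
            = of (gq * gg i) * t * (of (gq * gg i))⁻¹ := by
          simp only [map_mul, map_inv]
          group
        rw [hbi, h6]
        exact hbt _
    exact h5 ⟨v, rfl⟩
  -- M is normal
  have hnorm : ∀ h : HNNExtension G (Subgroup.zpowers x) (Subgroup.zpowers y) φ,
      ∀ w ∈ M, h * w * h⁻¹ ∈ M := by
    have main : ∀ h : HNNExtension G (Subgroup.zpowers x) (Subgroup.zpowers y) φ,
        (∀ w ∈ M, h * w * h⁻¹ ∈ M) ∧ (∀ w ∈ M, h⁻¹ * w * h ∈ M) := by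
      intro h
      induction h using HNNExtension.induction_on with
      | of g =>
        refine ⟨hGconj g, fun w hw => ?_⟩
        have := hGconj g⁻¹ w hw
        rwa [map_inv, inv_inv] at this
      | t =>
        exact ⟨fun w hw => mul_mem (mul_mem htmem hw) (inv_mem htmem),
          fun w hw => mul_mem (mul_mem (inv_mem htmem) hw) htmem⟩
      | mul a b iha ihb =>
        refine ⟨fun w hw => ?_, fun w hw => ?_⟩
        · have h1 := iha.1 _ (ihb.1 w hw)
          have h2 : a * (b * w * b⁻¹) * a⁻¹ = (a * b) * w * (a * b)⁻¹ := by group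
          rwa [h2] at h1
        · have h1 := ihb.2 _ (iha.2 w hw)
          have h2 : b⁻¹ * (a⁻¹ * w * a) * b = (a * b)⁻¹ * w * (a * b) := by group
          rwa [h2] at h1
      | inv a iha =>
        refine ⟨fun w hw => ?_, fun w hw => ?_⟩
        · rw [inv_inv]; exact iha.2 w hw
        · rw [inv_inv]; exact iha.1 w hw
    exact fun h => (main h).1
  haveI hMnormal : M.Normal := ⟨fun w hw h => hnorm h w hw⟩
  -- M together with the powers of (of gd) is everything
  have htop : ∀ h : HNNExtension G (Subgroup.zpowers x) (Subgroup.zpowers y) φ,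
      h ∈ M ⊔ Subgroup.zpowers (of gd) := by
    intro h
    induction h using HNNExtension.induction_on with
    | of g =>
      obtain ⟨z, hz⟩ := hdvd g
      have hk : g * gd ^ (-z) ∈ χ.ker := by
        apply hker0
        simp only [map_mul, map_zpow, toAdd_mul, toAdd_zpow, hgd, hz, smul_eq_mul]
        ring
      have h7 : (of g : HNNExtension G (Subgroup.zpowers x) (Subgroup.zpowers y) φ)
          = of (g * gd ^ (-z)) * (of gd) ^ z := by
        rw [map_mul, map_zpow]
        group
      rw [h7]
      exact Subgroup.mul_mem_sup (hofK _ hk) (zpow_mem (Subgroup.mem_zpowers _) z)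
    | t => exact SetLike.le_def.1 le_sup_left htmem
    | mul a b iha ihb => exact mul_mem iha ihb
    | inv a iha => exact inv_mem iha
  -- M is exactly the kernel of χ'
  have hMle : M ≤ χ'.ker := by
    rw [hM, hΨ]
    apply FreeGroup.range_lift_le
    rintro w' ⟨s, rfl⟩
    rcases s with a | i
    · show HnnAux.bbH φ kB gg (Sum.inl a) ∈ χ'.ker
      have hba : HnnAux.bbH φ kB gg (Sum.inl a) = of (kB a) := rfl
      rw [hba, MonoidHom.mem_ker, hχ'of]
      exact MonoidHom.mem_ker.1 (hkBK a)
    · show HnnAux.bbH φ kB gg (Sum.inr i) ∈ χ'.ker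
      have hbi : HnnAux.bbH φ kB gg (Sum.inr i) = of (gg i) * t * (of (gg i))⁻¹ := rfl
      rw [hbi, MonoidHom.mem_ker, map_mul, map_mul, map_inv, hχ't, hχ'of]
      simp
  have hkerle : χ'.ker ≤ M := by
    intro h hh
    have h8 := htop h
    rw [← SetLike.mem_coe, Subgroup.normal_mul] at h8
    obtain ⟨w, hw, p, hp, rfl⟩ := h8
    obtain ⟨z, rfl⟩ := Subgroup.mem_zpowers_iff.1 hp
    have h9 : χ' w = 1 := MonoidHom.mem_ker.1 (hMle hw)
    have h10 := MonoidHom.mem_ker.1 hh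
    rw [map_mul, h9, one_mul, map_zpow, hχ'of] at h10
    have h11 : z * d = 0 := by
      have h12 := congrArg Multiplicative.toAdd h10
      rwa [toAdd_zpow, hgd, smul_eq_mul] at h12
    have hz0 : z = 0 := by
      rcases mul_eq_zero.1 h11 with h13 | h13
      · exact h13
      · exact absurd h13 (ne_of_gt hdpos)
    rw [hz0]
    simpa using hw
  have hMker : M = χ'.ker := le_antisymm hMle hkerle
  refine ⟨n + e', ⟨?_⟩⟩
  exact ((MulEquiv.subgroupCongr hMker).symm.trans
    (MonoidHom.ofInjective hinj).symm).trans (FreeGroup.freeGroupCongr finSumFinEquiv)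
end

section
/- Let i, j, k, l be integers with (i,j) ≠ (0,0) and (k,l) ≠ (0,0). Then the group G presented by generators x, y, a, b and relators xy = yx, ab = ba, xⁱyʲ = aᵏbˡ is free-by-ℤ: there exists a normal subgroup N of G isomorphic to a free group of finite rank such that G/N is isomorphic to ℤ. -/
/-- Generators `x, y, a, b` of the two-vertex tubular group. -/
def x3 : FreeGroup (Fin 4) := FreeGroup.of 0
def y3 : FreeGroup (Fin 4) := FreeGroup.of 1
def a3 : FreeGroup (Fin 4) := FreeGroup.of 2
def b3 : FreeGroup (Fin 4) := FreeGroup.of 3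

/-- Relators `xy = yx`, `ab = ba`, `xⁱyʲ = aᵏbˡ`. -/
def rels3 (i j k l : ℤ) : Set (FreeGroup (Fin 4)) :=
  {x3 * y3 * (y3 * x3)⁻¹, a3 * b3 * (b3 * a3)⁻¹, x3 ^ i * y3 ^ j * (a3 ^ k * b3 ^ l)⁻¹}

namespace TwoVertexTubular

/-- Index type of the free basis: `U`, `Z₀..Z_{d-1}`, `W₀..W_{d(e-1)-1}`. -/
abbrev Gen (d e : ℕ) := Unit ⊕ (Fin d ⊕ Fin (d * (e - 1)))

abbrev FF (d e : ℕ) := FreeGroup (Gen d e)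

variable (d e : ℕ)

def U : FF d e := FreeGroup.of (Sum.inl ())
def Zb (s : Fin d) : FF d e := FreeGroup.of (Sum.inr (Sum.inl s))
def Wb (s : Fin (d * (e - 1))) : FF d e := FreeGroup.of (Sum.inr (Sum.inr s))

def ZbN (s : ℕ) : FF d e := if h : s < d then Zb d e ⟨s, h⟩ else 1
def WbN (s : ℕ) : FF d e := if h : s < d * (e - 1) then Wb d e ⟨s, h⟩ else 1

/-- the word `W_{d(e-1)}`, i.e. `(W_0 W_d ⋯ W_{(e-2)d})⁻¹ U^d`. -/
def wtop : FF d e :=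
  (((List.range (e - 1)).map (fun r => WbN d e (r * d))).prod)⁻¹ * (U d e) ^ d

/-- the word `W_s` for `0 ≤ s ≤ d(e-1)` (constant `U^d` if `e = 1`). -/
def Wex (s : ℕ) : FF d e :=
  if s < d * (e - 1) then WbN d e s else if e = 1 ∨ s = d * (e - 1) then wtop d e else 1

/-- the word `Z_s` for `0 ≤ s ≤ d`. -/
def Zex (s : ℕ) : FF d e :=
  if s < d then ZbN d e s else if s = d then (Wex d e 0)⁻¹ * ZbN d e 0 * Wex d e 1 else 1

/-- the word `W_{-1}`, i.e. `U^d (W_{d-1} W_{2d-1} ⋯ W_{(e-1)d-1})⁻¹`. -/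
def wneg : FF d e :=
  (U d e) ^ d * (((List.range (e - 1)).map (fun r => WbN d e (r * d + d - 1))).prod)⁻¹

/-- the word `Z_{-1} = W_{-1} Z_{d-1} W_0⁻¹`. -/
def zneg : FF d e := wneg d e * ZbN d e (d - 1) * (Wex d e 0)⁻¹

def φfun : Gen d e → FF d e
  | Sum.inl _ => U d e
  | Sum.inr (Sum.inl s) => Zex d e (s.val + 1)
  | Sum.inr (Sum.inr s) => Wex d e (s.val + 1)

def ψfun : Gen d e → FF d e
  | Sum.inl _ => U d e
  | Sum.inr (Sum.inl s) => if s.val = 0 then zneg d e else ZbN d e (s.val - 1)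
  | Sum.inr (Sum.inr s) => if s.val = 0 then wneg d e else WbN d e (s.val - 1)

def φf : FF d e →* FF d e := FreeGroup.lift (φfun d e)
def ψf : FF d e →* FF d e := FreeGroup.lift (ψfun d e)

variable {d e}

/-! ### evaluation lemmas -/

@[simp] lemma phi_U : φf d e (U d e) = U d e := FreeGroup.lift_apply_of
@[simp] lemma psi_U : ψf d e (U d e) = U d e := FreeGroup.lift_apply_of
@[simp] lemma phi_Zb (s : Fin d) : φf d e (Zb d e s) = Zex d e (s.val + 1) := FreeGroup.lift_apply_of
@[simp] lemma phi_Wb (s : Fin (d * (e - 1))) : φf d e (Wb d e s) = Wex d e (s.val + 1) :=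
  FreeGroup.lift_apply_of
@[simp] lemma psi_Zb (s : Fin d) :
    ψf d e (Zb d e s) = if s.val = 0 then zneg d e else ZbN d e (s.val - 1) := FreeGroup.lift_apply_of
@[simp] lemma psi_Wb (s : Fin (d * (e - 1))) :
    ψf d e (Wb d e s) = if s.val = 0 then wneg d e else WbN d e (s.val - 1) := FreeGroup.lift_apply_of

lemma ZbN_of_lt {s : ℕ} (h : s < d) : ZbN d e s = Zb d e ⟨s, h⟩ := dif_pos h
lemma WbN_of_lt {s : ℕ} (h : s < d * (e - 1)) : WbN d e s = Wb d e ⟨s, h⟩ := dif_pos h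

lemma Zex_of_lt {s : ℕ} (h : s < d) : Zex d e s = ZbN d e s := if_pos h
lemma Wex_of_lt {s : ℕ} (h : s < d * (e - 1)) : Wex d e s = WbN d e s := if_pos h

lemma Zex_top (hd : 0 < d) :
    Zex d e d = (Wex d e 0)⁻¹ * ZbN d e 0 * Wex d e 1 := by
  rw [Zex, if_neg (lt_irrefl d), if_pos rfl]

lemma Wex_top (hd : 0 < d) (he : 0 < e) : Wex d e (d * (e - 1)) = wtop d e := by
  rw [Wex, if_neg (lt_irrefl _)]
  exact if_pos (Or.inr rfl)

lemma Wex_of_e_eq_one (he : e = 1) (s : ℕ) : Wex d e s = (U d e) ^ d := by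
  subst he
  simp only [Wex, Nat.sub_self, Nat.mul_zero, Nat.not_lt_zero, if_false, wtop,
    List.range_zero, List.map_nil, List.prod_nil, inv_one, one_mul]
  simp

lemma wtop_of_e_eq_one (he : e = 1) : wtop d e = (U d e) ^ d := by
  subst he
  simp [wtop]

/-! ### list product helpers -/

lemma prodRange_succ {G : Type*} [Group G] (f : ℕ → G) (n : ℕ) :
    ((List.range (n + 1)).map f).prod = ((List.range n).map f).prod * f n := by
  simp [List.range_succ]

lemma prodRange_succ' {G : Type*} [Group G] (f : ℕ → G) (n : ℕ) :
    ((List.range (n + 1)).map f).prod = f 0 * ((List.range n).map (fun r => f (r + 1))).prod := by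
  rw [List.range_succ_eq_map]
  simp [Function.comp_def]

lemma prodRange_congr {G : Type*} [Group G] {f g : ℕ → G} {n : ℕ}
    (h : ∀ r < n, f r = g r) :
    ((List.range n).map f).prod = ((List.range n).map g).prod := by
  congr 1
  apply List.map_congr_left
  intro a ha
  exact h a (List.mem_range.mp ha)

lemma prodRange_hom {G H : Type*} [Group G] [Group H] (F : G →* H) (f : ℕ → G) (n : ℕ) :
    F ((List.range n).map f).prod = ((List.range n).map (fun r => F (f r))).prod := by
  rw [← List.prod_hom _ F, List.map_map]
  rfl

end TwoVertexTubular

namespace TwoVertexTubular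

variable {d e : ℕ}


lemma e21 (e₂ : ℕ) : e₂ + 2 - 1 = e₂ + 1 := rfl

lemma arith1 (d e₂ : ℕ) : d * (e₂ + 2 - 1) = e₂ * d + d := by rw [e21]; ring

lemma hm_pos {d : ℕ} (hd : 0 < d) (e₂ : ℕ) : 0 < d * (e₂ + 2 - 1) :=
  Nat.mul_pos hd (by omega)

lemma phi_ZbN {s : ℕ} (h : s < d) : φf d e (ZbN d e s) = Zex d e (s + 1) := by
  rw [ZbN_of_lt h, phi_Zb]

lemma phi_WbN {s : ℕ} (h : s < d * (e - 1)) : φf d e (WbN d e s) = Wex d e (s + 1) := by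
  rw [WbN_of_lt h, phi_Wb]

lemma phi_Ud : φf d e ((U d e) ^ d) = (U d e) ^ d := by
  rw [map_pow, phi_U]

lemma psi_Ud : ψf d e ((U d e) ^ d) = (U d e) ^ d := by
  rw [map_pow, psi_U]

lemma phi_Wex {s : ℕ} (h : s < d * (e - 1) ∨ e = 1) :
    φf d e (Wex d e s) = Wex d e (s + 1) := by
  rcases h with h | h
  · rw [Wex_of_lt h, phi_WbN h]
  · rw [Wex_of_e_eq_one h, Wex_of_e_eq_one h, phi_Ud]

lemma phi_wneg (hd : 0 < d) (he : 0 < e) : φf d e (wneg d e) = Wex d e 0 := by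
  rcases Nat.lt_or_ge e 2 with h2 | h2
  · -- e = 1
    have he1 : e = 1 := by omega
    rw [Wex_of_e_eq_one he1, wneg, he1]
    simp [phi_Ud]
  · -- e ≥ 2
    obtain ⟨e₂, rfl⟩ : ∃ e₂, e = e₂ + 2 := ⟨e - 2, by omega⟩
    have hm : 0 < d * (e₂ + 2 - 1) := hm_pos hd e₂
    have hmm : d * (e₂ + 2 - 1) = e₂ * d + d := arith1 d e₂
    rw [wneg, map_mul, map_inv, phi_Ud, prodRange_hom]
    have hstep : ∀ r < e₂ + 2 - 1, φf d (e₂+2) (WbN d (e₂+2) (r * d + d - 1))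
        = Wex d (e₂+2) ((r+1) * d) := by
      intro r hr
      have h1 : 1 ≤ r * d + d := le_trans hd (Nat.le_add_left d _)
      have hrd : r * d + d = (r + 1) * d := by ring
      have h2 : (r + 1) * d ≤ (e₂ + 1) * d := Nat.mul_le_mul_right d (by omega)
      have h3 : (e₂ + 1) * d = e₂ * d + d := by ring
      have hlt : r * d + d - 1 < d * (e₂ + 2 - 1) := by omega
      rw [phi_WbN hlt]
      congr 1
      omega
    rw [prodRange_congr hstep]
    -- now the product ∏_{r<e₂+1} Wex ((r+1)d) = WbN 0⁻¹ * U^d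
    have hsplit : ((List.range (e₂ + 2 - 1)).map (fun r => Wex d (e₂+2) ((r+1) * d))).prod
        = (WbN d (e₂+2) 0)⁻¹ * (U d (e₂+2)) ^ d := by
      rw [e21, prodRange_succ]
      have hlast : Wex d (e₂+2) ((e₂+1) * d) = wtop d (e₂+2) := by
        have h4 : (e₂ + 1) * d = d * (e₂ + 2 - 1) := by rw [e21]; ring
        rw [h4, Wex_top hd (by omega)]
      have hbody : ∀ r < e₂, Wex d (e₂+2) ((r+1) * d) = WbN d (e₂+2) ((r+1) * d) := by
        intro r hr
        apply Wex_of_lt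
        have h5 : (r + 1) * d < (e₂ + 1) * d := by
          exact Nat.mul_lt_mul_of_lt_of_le (by omega) (le_refl d) hd
        have h3 : (e₂ + 1) * d = e₂ * d + d := by ring
        omega
      rw [hlast, prodRange_congr hbody, wtop]
      have hfirst : ((List.range (e₂ + 2 - 1)).map (fun r => WbN d (e₂+2) (r * d))).prod
          = WbN d (e₂+2) 0 * ((List.range e₂).map (fun r => WbN d (e₂+2) ((r+1) * d))).prod := by
        rw [e21, prodRange_succ']
        simp [zero_mul]
      rw [hfirst]
      group
    rw [hsplit]
    have h0 : Wex d (e₂+2) 0 = WbN d (e₂+2) 0 := Wex_of_lt hm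
    rw [h0]
    group

lemma psi_wtop (hd : 0 < d) {e₂ : ℕ} (he : e = e₂ + 2) :
    ψf d e (wtop d e) = WbN d e (d * (e - 1) - 1) := by
  subst he
  have hm : 0 < d * (e₂ + 2 - 1) := hm_pos hd e₂
  have hmm : d * (e₂ + 2 - 1) = e₂ * d + d := arith1 d e₂
  rw [wtop, map_mul, map_inv, psi_Ud, prodRange_hom]
  have hstep : ∀ r < e₂ + 2 - 1, ψf d (e₂+2) (WbN d (e₂+2) (r * d))
      = if r = 0 then wneg d (e₂+2) else WbN d (e₂+2) (r * d - 1) := by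
    intro r hr
    have h2 : (r + 1) * d ≤ (e₂ + 1) * d := Nat.mul_le_mul_right d (by omega)
    have h3 : (e₂ + 1) * d = e₂ * d + d := by ring
    have hrd : (r + 1) * d = r * d + d := by ring
    have hlt : r * d < d * (e₂ + 2 - 1) := by omega
    rw [WbN_of_lt hlt, psi_Wb]
    rcases Nat.eq_zero_or_pos r with h0 | h0
    · subst h0; simp
    · have h4 : r * d ≠ 0 := by positivity
      rw [if_neg h4, if_neg (by omega)]
  rw [prodRange_congr hstep, e21, prodRange_succ', if_pos rfl]
  have hbody : ∀ r < e₂,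
      (if r + 1 = 0 then wneg d (e₂+2) else WbN d (e₂+2) ((r+1) * d - 1))
      = WbN d (e₂+2) (r * d + d - 1) := by
    intro r hr
    rw [if_neg (by omega)]
    congr 1
    have hrd : (r+1) * d = r * d + d := by ring
    omega
  rw [prodRange_congr hbody, wneg]
  have hsplit : ((List.range (e₂ + 2 - 1)).map (fun r => WbN d (e₂+2) (r * d + d - 1))).prod
      = ((List.range e₂).map (fun r => WbN d (e₂+2) (r * d + d - 1))).prod
        * WbN d (e₂+2) (d * (e₂ + 2 - 1) - 1) := by
    rw [e21, prodRange_succ]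
    have h6 : d * (e₂ + 1) = e₂ * d + d := by ring
    congr 2
    omega
  rw [hsplit]
  group
  congr 1
  have h7 : d * (2 + e₂ - 1) = d + d * e₂ := by
    rw [show 2 + e₂ - 1 = e₂ + 1 by omega]; ring
  omega

lemma psi_ZbN0 (hd : 0 < d) : ψf d e (ZbN d e 0) = zneg d e := by
  rw [ZbN_of_lt hd, psi_Zb, if_pos rfl]

lemma psi_Wex0 (hd : 0 < d) (he : 0 < e) : ψf d e (Wex d e 0) = wneg d e := by
  rcases Nat.lt_or_ge e 2 with h2 | h2
  · have he1 : e = 1 := by omega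
    rw [Wex_of_e_eq_one he1, psi_Ud, wneg, he1]
    simp
  · have hm : 0 < d * (e - 1) := by
      have : 0 < e - 1 := by omega
      positivity
    rw [Wex_of_lt hm, WbN_of_lt hm, psi_Wb, if_pos rfl]

lemma psi_Wex1 (hd : 0 < d) (he : 0 < e) : ψf d e (Wex d e 1) = Wex d e 0 := by
  rcases Nat.lt_or_ge e 2 with h2 | h2
  · have he1 : e = 1 := by omega
    rw [Wex_of_e_eq_one he1, psi_Ud, Wex_of_e_eq_one he1]
  · obtain ⟨e₂, he2⟩ : ∃ e₂, e = e₂ + 2 := ⟨e - 2, by omega⟩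
    have hm : 0 < d * (e - 1) := by
      have : 0 < e - 1 := by omega
      positivity
    rcases Nat.lt_or_ge 1 (d * (e - 1)) with h1 | h1
    · have hco : ((⟨1, h1⟩ : Fin (d * (e - 1))) : ℕ) = 1 := rfl
      rw [Wex_of_lt h1, WbN_of_lt h1, psi_Wb, hco, if_neg one_ne_zero]
      rw [Wex_of_lt hm]
    · -- d*(e-1) = 1, so d = 1, e = 2
      have hm1 : d * (e - 1) = 1 := by omega
      have : (1 : ℕ) = d * (e - 1) := hm1.symm
      rw [this, Wex_top hd he, psi_wtop hd he2, hm1]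
      rw [Wex_of_lt hm]
end TwoVertexTubular

namespace TwoVertexTubular

variable {d e : ℕ}

lemma mOr (hd : 0 < d) (he : 0 < e) : 0 < d * (e - 1) ∨ e = 1 := by
  rcases Nat.lt_or_ge e 2 with h | h
  · right; omega
  · left; exact Nat.mul_pos hd (by omega)

lemma e_ge_two_of_m_pos (hm : 0 < d * (e - 1)) : ∃ e₂, e = e₂ + 2 := by
  refine ⟨e - 2, ?_⟩
  have h1 : e - 1 ≠ 0 := by
    intro h
    rw [h, Nat.mul_zero] at hm
    exact absurd hm (lt_irrefl 0)
  omega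

lemma psi_phi (hd : 0 < d) (he : 0 < e) :
    (ψf d e).comp (φf d e) = MonoidHom.id (FF d e) := by
  apply FreeGroup.ext_hom
  rintro (⟨⟩ | s | s) <;>
    simp only [MonoidHom.comp_apply, MonoidHom.id_apply]
  · rw [show FreeGroup.of (Sum.inl () : Gen d e) = U d e from rfl, phi_U, psi_U]
  · rw [show FreeGroup.of (Sum.inr (Sum.inl s) : Gen d e) = Zb d e s from rfl, phi_Zb]
    rcases Nat.lt_or_ge (s.val + 1) d with h | h
    · rw [Zex_of_lt h, ZbN_of_lt h, psi_Zb, if_neg (Nat.succ_ne_zero s.val),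
        Nat.add_sub_cancel, ZbN_of_lt s.isLt]
    · have hs : s.val = d - 1 := by have := s.isLt; omega
      have hZ : ZbN d e (d - 1) = Zb d e s := by
        rw [ZbN_of_lt (by omega : d - 1 < d)]
        congr 1
        exact Fin.ext (by simpa using hs.symm)
      rw [show s.val + 1 = d from by have := s.isLt; omega, Zex_top hd, map_mul, map_mul,
        map_inv, psi_Wex0 hd he, psi_ZbN0 hd, psi_Wex1 hd he, zneg, hZ]
      group
  · rw [show FreeGroup.of (Sum.inr (Sum.inr s) : Gen d e) = Wb d e s from rfl, phi_Wb]
    rcases Nat.lt_or_ge (s.val + 1) (d * (e - 1)) with h | h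
    · rw [Wex_of_lt h, WbN_of_lt h, psi_Wb, if_neg (Nat.succ_ne_zero s.val),
        Nat.add_sub_cancel, WbN_of_lt s.isLt]
    · have hm : 0 < d * (e - 1) := lt_of_le_of_lt (Nat.zero_le _) s.isLt
      obtain ⟨e₂, he2⟩ := e_ge_two_of_m_pos hm
      have hs : s.val = d * (e - 1) - 1 := by have := s.isLt; omega
      rw [show s.val + 1 = d * (e - 1) from by have := s.isLt; omega, Wex_top hd he,
        psi_wtop hd he2, WbN_of_lt (by omega : d * (e - 1) - 1 < d * (e - 1))]
      congr 1
      exact Fin.ext (by simpa using hs.symm)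

lemma phi_psi (hd : 0 < d) (he : 0 < e) :
    (φf d e).comp (ψf d e) = MonoidHom.id (FF d e) := by
  apply FreeGroup.ext_hom
  rintro (⟨⟩ | s | s) <;>
    simp only [MonoidHom.comp_apply, MonoidHom.id_apply]
  · rw [show FreeGroup.of (Sum.inl () : Gen d e) = U d e from rfl, psi_U, phi_U]
  · rw [show FreeGroup.of (Sum.inr (Sum.inl s) : Gen d e) = Zb d e s from rfl, psi_Zb]
    rcases Nat.eq_zero_or_pos s.val with h0 | h0
    · have hZ : ZbN d e 0 = Zb d e s := by
        rw [ZbN_of_lt hd]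
        congr 1
        exact Fin.ext (by simpa using h0.symm)
      rw [if_pos h0, zneg, map_mul, map_mul, map_inv, phi_wneg hd he,
        phi_ZbN (by omega : d - 1 < d), show d - 1 + 1 = d from by omega, Zex_top hd,
        phi_Wex (mOr hd he), hZ]
      group
    · rw [if_neg (by omega), phi_ZbN (by omega : s.val - 1 < d),
        show s.val - 1 + 1 = s.val from by omega, Zex_of_lt s.isLt, ZbN_of_lt s.isLt]
  · rw [show FreeGroup.of (Sum.inr (Sum.inr s) : Gen d e) = Wb d e s from rfl, psi_Wb]
    have hm : 0 < d * (e - 1) := lt_of_le_of_lt (Nat.zero_le _) s.isLt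
    rcases Nat.eq_zero_or_pos s.val with h0 | h0
    · rw [if_pos h0, phi_wneg hd he, Wex_of_lt hm, WbN_of_lt hm]
      congr 1
      exact Fin.ext (by simpa using h0.symm)
    · rw [if_neg (by omega), phi_WbN (by omega : s.val - 1 < d * (e - 1)),
        show s.val - 1 + 1 = s.val from by omega, Wex_of_lt s.isLt, WbN_of_lt s.isLt]

/-- The monodromy automorphism. -/
def φaut (hd : 0 < d) (he : 0 < e) : MulAut (FF d e) :=
  MonoidHom.toMulEquiv (φf d e) (ψf d e) (psi_phi hd he) (phi_psi hd he)

lemma φaut_apply (hd : 0 < d) (he : 0 < e) (x : FF d e) : φaut hd he x = φf d e x := rfl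

lemma φaut_symm_apply (hd : 0 < d) (he : 0 < e) (x : FF d e) :
    (φaut hd he).symm x = ψf d e x := rfl

lemma φaut_inv_apply (hd : 0 < d) (he : 0 < e) (x : FF d e) :
    (φaut hd he)⁻¹ x = ψf d e x := rfl

lemma φaut_pow_succ (hd : 0 < d) (he : 0 < e) (n : ℕ) (x : FF d e) :
    (φaut hd he ^ (n + 1)) x = φaut hd he ((φaut hd he ^ n) x) := by
  rw [pow_succ']
  rfl

lemma iterZ (hd : 0 < d) (he : 0 < e) :
    ∀ s, s ≤ d → ((φaut hd he) ^ s) (ZbN d e 0) = Zex d e s := by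
  intro s
  induction s with
  | zero => intro _; rw [pow_zero, Zex_of_lt hd]; rfl
  | succ n ih =>
    intro h
    rw [φaut_pow_succ, ih (by omega), φaut_apply, Zex_of_lt (by omega : n < d),
      phi_ZbN (by omega : n < d)]

lemma iterW (hd : 0 < d) (he : 0 < e) :
    ∀ s, (s ≤ d * (e - 1) ∨ e = 1) → ((φaut hd he) ^ s) (Wex d e 0) = Wex d e s := by
  intro s
  induction s with
  | zero => intro _; rw [pow_zero]; rfl
  | succ n ih =>
    intro h
    have hn : n ≤ d * (e - 1) ∨ e = 1 := h.imp (fun h' => by omega) id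
    rw [φaut_pow_succ, ih hn, φaut_apply, phi_Wex]
    rcases h with h | h
    · left; omega
    · right; exact h

lemma iterU_nat (hd : 0 < d) (he : 0 < e) (n : ℕ) : ((φaut hd he) ^ n) (U d e) = U d e := by
  induction n with
  | zero => rfl
  | succ n ih => rw [φaut_pow_succ, ih, φaut_apply, phi_U]

lemma iterU (hd : 0 < d) (he : 0 < e) (n : ℤ) : ((φaut hd he) ^ n) (U d e) = U d e := by
  induction n using Int.induction_on with
  | zero => rfl
  | succ n ih =>
    rw [zpow_add_one]
    have : ((φaut hd he) ^ (n : ℤ) * φaut hd he) (U d e)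
        = ((φaut hd he) ^ (n : ℤ)) (φaut hd he (U d e)) := rfl
    rw [this, φaut_apply, phi_U, ih]
  | pred n ih =>
    rw [zpow_sub_one]
    have : ((φaut hd he) ^ (-n : ℤ) * (φaut hd he)⁻¹) (U d e)
        = ((φaut hd he) ^ (-n : ℤ)) ((φaut hd he)⁻¹ (U d e)) := rfl
    rw [this, φaut_inv_apply, psi_U, ih]

lemma prodW (hd : 0 < d) (he : 0 < e) :
    ((List.range e).map (fun r => Wex d e (r * d))).prod = (U d e) ^ d := by
  obtain ⟨e₁, rfl⟩ : ∃ e₁, e = e₁ + 1 := ⟨e - 1, by omega⟩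
  rw [prodRange_succ]
  have hlast : Wex d (e₁+1) (e₁ * d) = wtop d (e₁+1) := by
    rw [show e₁ * d = d * (e₁ + 1 - 1) from by simp [mul_comm], Wex_top hd he]
  have hbody : ∀ r < e₁, Wex d (e₁+1) (r * d) = WbN d (e₁+1) (r * d) := by
    intro r hr
    apply Wex_of_lt
    have h5 : r * d < e₁ * d := Nat.mul_lt_mul_of_lt_of_le (by omega) (le_refl d) hd
    have h6 : e₁ * d = d * (e₁ + 1 - 1) := by simp [mul_comm]
    omega
  rw [hlast, prodRange_congr hbody, wtop]
  have h7 : ((List.range (e₁ + 1 - 1)).map (fun r => WbN d (e₁+1) (r * d))).prod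
      = ((List.range e₁).map (fun r => WbN d (e₁+1) (r * d))).prod := by
    norm_num
  rw [h7]
  group

end TwoVertexTubular

namespace TwoVertexTubular

section PhaseB

variable {d e : ℕ}

/-- generators u, v, w, z -/
def gu : FreeGroup (Fin 4) := FreeGroup.of 0
def gv : FreeGroup (Fin 4) := FreeGroup.of 1
def gw : FreeGroup (Fin 4) := FreeGroup.of 2
def gz : FreeGroup (Fin 4) := FreeGroup.of 3

def rels' (d e : ℕ) : Set (FreeGroup (Fin 4)) :=
  {gu * gv * (gv * gu)⁻¹, gw * gz * (gz * gw)⁻¹, gu ^ d * (gw ^ e)⁻¹}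

abbrev P' (d e : ℕ) := PresentedGroup (rels' d e)

def pu : P' d e := PresentedGroup.of 0
def pv : P' d e := PresentedGroup.of 1
def pw : P' d e := PresentedGroup.of 2
def pz : P' d e := PresentedGroup.of 3

lemma relator_eq_one {α : Type*} {rels : Set (FreeGroup α)} {r : FreeGroup α} (h : r ∈ rels) :
    PresentedGroup.mk rels r = 1 :=
  (QuotientGroup.eq_one_iff r).mpr (Subgroup.subset_normalClosure h)

lemma comm_uv : Commute (pu : P' d e) pv := by
  have h := relator_eq_one (show gu * gv * (gv * gu)⁻¹ ∈ rels' d e by left; rfl)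
  rw [map_mul, map_inv, map_mul] at h
  exact (mul_inv_eq_one.mp h)

lemma comm_wz : Commute (pw : P' d e) pz := by
  have h := relator_eq_one (show gw * gz * (gz * gw)⁻¹ ∈ rels' d e by right; left; rfl)
  rw [map_mul, map_inv, map_mul] at h
  exact (mul_inv_eq_one.mp h)

lemma rel_uw : (pu : P' d e) ^ d = (pw : P' d e) ^ e := by
  have h := relator_eq_one (show gu ^ d * (gw ^ e)⁻¹ ∈ rels' d e by right; right; rfl)
  rw [map_mul, map_inv, map_pow, map_pow] at h
  exact (mul_inv_eq_one.mp h)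

variable (hd : 0 < d) (he : 0 < e)

def φz : Multiplicative ℤ →* MulAut (FF d e) := zpowersHom _ (φaut hd he)

lemma φz_apply (n : ℤ) : φz hd he (Multiplicative.ofAdd n) = (φaut hd he) ^ n := by
  simp [φz, zpowersHom_apply]

abbrev MM := FF d e ⋊[φz hd he] Multiplicative ℤ

open SemidirectProduct

lemma ofAdd_pow (a : ℤ) (t : ℕ) :
    (Multiplicative.ofAdd a) ^ t = Multiplicative.ofAdd ((t : ℤ) * a) := by
  rw [← ofAdd_nsmul, nsmul_eq_mul]

lemma mk_pow (n : FF d e) (g : Multiplicative ℤ) (t : ℕ) :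
    ((⟨n, g⟩ : MM hd he)) ^ t
      = ⟨((List.range t).map (fun r => (φz hd he) (g ^ r) n)).prod, g ^ t⟩ := by
  induction t with
  | zero => simp
  | succ t ih =>
    rw [pow_succ, ih, mul_def]
    refine SemidirectProduct.ext ?_ ?_
    · simp only [prodRange_succ, map_mul]
    · simp [pow_succ]

/-- images of the generators u, v, w, z in the semidirect product -/
def mfun : Fin 4 → MM hd he :=
  ![⟨U d e, Multiplicative.ofAdd (e : ℤ)⟩,
    ⟨1, Multiplicative.ofAdd (1 : ℤ)⟩,
    ⟨Wex d e 0, Multiplicative.ofAdd (d : ℤ)⟩,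
    ⟨ZbN d e 0, Multiplicative.ofAdd (1 : ℤ)⟩]

lemma φz_U (g : Multiplicative ℤ) : (φz hd he) g (U d e) = U d e := by
  rw [show g = Multiplicative.ofAdd (g.toAdd) from rfl, φz_apply, iterU]

lemma mfun_rel1 :
    mfun hd he 0 * mfun hd he 1 = mfun hd he 1 * mfun hd he 0 := by
  show (⟨U d e, Multiplicative.ofAdd (e:ℤ)⟩ : MM hd he) * ⟨1, Multiplicative.ofAdd (1:ℤ)⟩
      = ⟨1, Multiplicative.ofAdd (1:ℤ)⟩ * ⟨U d e, Multiplicative.ofAdd (e:ℤ)⟩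
  rw [mul_def, mul_def]
  refine SemidirectProduct.ext ?_ ?_
  · rw [map_one, mul_one, φz_U, one_mul]
  · exact mul_comm _ _

lemma mfun_rel2 :
    mfun hd he 2 * mfun hd he 3 = mfun hd he 3 * mfun hd he 2 := by
  show (⟨Wex d e 0, Multiplicative.ofAdd (d:ℤ)⟩ : MM hd he) * ⟨ZbN d e 0, Multiplicative.ofAdd (1:ℤ)⟩
      = ⟨ZbN d e 0, Multiplicative.ofAdd (1:ℤ)⟩ * ⟨Wex d e 0, Multiplicative.ofAdd (d:ℤ)⟩
  rw [mul_def, mul_def]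
  have h1 : (φz hd he) (Multiplicative.ofAdd (d:ℤ)) (ZbN d e 0)
      = (Wex d e 0)⁻¹ * ZbN d e 0 * Wex d e 1 := by
    rw [φz_apply, show ((d:ℤ)) = ((d:ℕ) : ℤ) from rfl, zpow_natCast, iterZ hd he d le_rfl,
      Zex_top hd]
  have h2 : (φz hd he) (Multiplicative.ofAdd (1:ℤ)) (Wex d e 0) = Wex d e 1 := by
    rw [φz_apply, zpow_one, φaut_apply, phi_Wex (mOr hd he)]
  refine SemidirectProduct.ext ?_ ?_
  · rw [h1, h2]
    group
  · exact mul_comm _ _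

lemma mfun_rel3 :
    (mfun hd he 0) ^ d = (mfun hd he 2) ^ e := by
  show ((⟨U d e, Multiplicative.ofAdd (e:ℤ)⟩ : MM hd he)) ^ d
      = ((⟨Wex d e 0, Multiplicative.ofAdd (d:ℤ)⟩ : MM hd he)) ^ e
  rw [mk_pow, mk_pow]
  have hU : ((List.range d).map
      (fun r => (φz hd he) ((Multiplicative.ofAdd (e:ℤ)) ^ r) (U d e))).prod = (U d e) ^ d := by
    have hcongr : ∀ r < d, (φz hd he) ((Multiplicative.ofAdd (e:ℤ)) ^ r) (U d e) = U d e :=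
      fun r _ => φz_U hd he _
    rw [prodRange_congr hcongr]
    simp
  have hW : ((List.range e).map
      (fun r => (φz hd he) ((Multiplicative.ofAdd (d:ℤ)) ^ r) (Wex d e 0))).prod
      = (U d e) ^ d := by
    have hcongr : ∀ r < e, (φz hd he) ((Multiplicative.ofAdd (d:ℤ)) ^ r) (Wex d e 0)
        = Wex d e (r * d) := by
      intro r hr
      rw [ofAdd_pow, φz_apply, show ((r:ℤ) * (d:ℤ)) = (((r * d : ℕ)) : ℤ) from by push_cast; ring,
        zpow_natCast, iterW hd he (r * d)]
      rcases Nat.lt_or_ge e 2 with h2 | h2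
      · right; omega
      · left
        calc r * d ≤ (e - 1) * d := Nat.mul_le_mul_right d (by omega)
        _ = d * (e - 1) := mul_comm _ _
    rw [prodRange_congr hcongr, prodW hd he]
  refine SemidirectProduct.ext ?_ ?_
  · rw [hU, hW]
  · rw [ofAdd_pow, ofAdd_pow, mul_comm]

lemma mfun_rels : ∀ r ∈ rels' d e, FreeGroup.lift (mfun hd he) r = 1 := by
  intro r hr
  rcases hr with rfl | rfl | rfl
  · simp only [map_mul, map_inv, gu, gv, FreeGroup.lift_apply_of]
    rw [mul_inv_eq_one, mfun_rel1]
  · simp only [map_mul, map_inv, gw, gz, FreeGroup.lift_apply_of]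
    rw [mul_inv_eq_one, mfun_rel2]
  · simp only [map_mul, map_inv, map_pow, gu, gw, FreeGroup.lift_apply_of]
    rw [mul_inv_eq_one, mfun_rel3]

/-- the homomorphism from the presented group to the semidirect product -/
def ΦP : P' d e →* MM hd he := PresentedGroup.toGroup (mfun_rels hd he)

end PhaseB

end TwoVertexTubular

namespace TwoVertexTubular

section PhaseC

open SemidirectProduct

variable {d e : ℕ}

def θfun (d e : ℕ) : Gen d e → P' d e
  | Sum.inl _ => pu * pv ^ (-(e:ℤ))
  | Sum.inr (Sum.inl s) => pv ^ (s.val : ℤ) * pz * pv ^ (-(s.val : ℤ) - 1)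
  | Sum.inr (Sum.inr s) => pv ^ (s.val : ℤ) * pw * pv ^ (-(s.val : ℤ) - (d:ℤ))

def θP (d e : ℕ) : FF d e →* P' d e := FreeGroup.lift (θfun d e)

@[simp] lemma θP_U : θP d e (U d e) = pu * pv ^ (-(e:ℤ)) := FreeGroup.lift_apply_of
@[simp] lemma θP_Zb (s : Fin d) :
    θP d e (Zb d e s) = pv ^ (s.val : ℤ) * pz * pv ^ (-(s.val : ℤ) - 1) := FreeGroup.lift_apply_of
@[simp] lemma θP_Wb (s : Fin (d * (e-1))) :
    θP d e (Wb d e s) = pv ^ (s.val : ℤ) * pw * pv ^ (-(s.val : ℤ) - (d:ℤ)) := FreeGroup.lift_apply_of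

lemma θP_ZbN {s : ℕ} (h : s < d) :
    θP d e (ZbN d e s) = pv ^ (s : ℤ) * pz * pv ^ (-(s : ℤ) - 1) := by
  rw [ZbN_of_lt h, θP_Zb]

lemma θP_WbN {s : ℕ} (h : s < d * (e-1)) :
    θP d e (WbN d e s) = pv ^ (s : ℤ) * pw * pv ^ (-(s : ℤ) - (d:ℤ)) := by
  rw [WbN_of_lt h, θP_Wb]

lemma pu_pow_d : ((pu : P' d e) * pv ^ (-(e:ℤ))) ^ d = pw ^ e * pv ^ (-(e:ℤ) * (d:ℤ)) := by
  rw [Commute.mul_pow (comm_uv.zpow_right (-(e:ℤ)))]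
  rw [← rel_uw]
  congr 1
  rw [← zpow_natCast (pv ^ (-(e:ℤ))) d, ← zpow_mul]

lemma comm_wv_of_e_one (he1 : e = 1) : Commute (pw : P' d e) pv := by
  have h : (pu : P' d e) ^ d = pw := by rw [rel_uw, he1, pow_one]
  rw [← h]
  exact comm_uv.pow_left d

/-- `e = 1` case: `θ` sends each `Wex s` (which is `U^d`) to `v^s w v^{-s-d}`. -/
lemma LCe1 (hd : 0 < d) (he1 : e = 1) (s : ℕ) :
    θP d e (Wex d e s) = pv ^ (s : ℤ) * pw * pv ^ (-(s : ℤ) - (d:ℤ)) := by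
  subst he1
  rw [Wex_of_e_eq_one rfl, map_pow, θP_U, pu_pow_d, pow_one]
  have key : (pv : P' d 1) ^ (s:ℤ) * pw = pw * pv ^ (s:ℤ) :=
    ((comm_wv_of_e_one rfl).zpow_right (s:ℤ)).symm.eq
  symm
  calc pv ^ (s:ℤ) * pw * pv ^ (-(s:ℤ) - (d:ℤ))
      = pv ^ (s:ℤ) * pw * pv ^ (-(s:ℤ) - (d:ℤ)) := rfl
    _ = pw * pv ^ (s:ℤ) * pv ^ (-(s:ℤ) - (d:ℤ)) := by rw [key]
    _ = pw * pv ^ (-((1:ℕ):ℤ) * (d:ℤ)) := by push_cast; group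

/-- telescoping product of the `v^{rd} w v^{-rd-d}`. -/
lemma teleW (n : ℕ) :
    ((List.range n).map
      (fun (r : ℕ) => (pv : P' d e) ^ ((r:ℤ) * (d:ℤ)) * pw * pv ^ (-((r:ℤ) * (d:ℤ)) - (d:ℤ)))).prod
    = pw ^ n * pv ^ (-(n:ℤ) * (d:ℤ)) := by
  induction n with
  | zero => simp
  | succ n ih =>
    rw [prodRange_succ, ih]
    push_cast
    group

/-- `θ` sends `Wex s` to `v^s w v^{-s-d}` for `s ≤ d(e-1)` (or any `s` if `e = 1`). -/
lemma LC (hd : 0 < d) (he : 0 < e) {s : ℕ} (h : s ≤ d * (e - 1) ∨ e = 1) :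
    θP d e (Wex d e s) = pv ^ (s : ℤ) * pw * pv ^ (-(s : ℤ) - (d:ℤ)) := by
  rcases Nat.lt_or_ge e 2 with h2 | h2
  · exact LCe1 hd (by omega) s
  · obtain ⟨e₂, rfl⟩ : ∃ e₂, e = e₂ + 2 := ⟨e - 2, by omega⟩
    replace h : s ≤ d * (e₂ + 1) := by
      rcases h with h | h
      · simpa using h
      · omega
    rcases Nat.lt_or_ge s (d * (e₂ + 2 - 1)) with hs | hs
    · rw [Wex_of_lt hs]
      exact θP_WbN hs
    · have hs' : d * (e₂ + 1) ≤ s := by rwa [e21] at hs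
      have hsm : s = d * (e₂ + 2 - 1) := by rw [e21]; omega
      rw [hsm, Wex_top hd (by omega), wtop, map_mul, map_inv, map_pow, θP_U, prodRange_hom,
        pu_pow_d]
      have hcongr : ∀ r < e₂ + 2 - 1, θP d (e₂+2) (WbN d (e₂+2) (r * d))
          = (pv : P' d (e₂+2)) ^ ((r:ℤ) * (d:ℤ)) * pw * pv ^ (-((r:ℤ) * (d:ℤ)) - (d:ℤ)) := by
        intro r hr
        have hlt : r * d < d * (e₂ + 2 - 1) := by
          rw [mul_comm d]
          exact Nat.mul_lt_mul_of_lt_of_le hr (le_refl d) hd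
        rw [θP_WbN hlt]
        push_cast
        rfl
      rw [prodRange_congr (g := fun (r : ℕ) => (pv : P' d (e₂+2)) ^ ((r:ℤ) * (d:ℤ)) * pw *
            pv ^ (-((r:ℤ) * (d:ℤ)) - (d:ℤ))) hcongr,
        e21, teleW]
      rw [← zpow_natCast (pw : P' d (e₂+2)) (e₂+1), ← zpow_natCast (pw : P' d (e₂+2)) (e₂+2)]
      push_cast
      group

/-- `θ` sends `Zex s` to `v^s z v^{-s-1}` for `s ≤ d`. -/
lemma LD (hd : 0 < d) (he : 0 < e) {s : ℕ} (h : s ≤ d) :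
    θP d e (Zex d e s) = pv ^ (s : ℤ) * pz * pv ^ (-(s : ℤ) - 1) := by
  rcases Nat.lt_or_ge s d with hs | hs
  · rw [Zex_of_lt hs, θP_ZbN hs]
  · have hside : (1:ℕ) ≤ d * (e - 1) ∨ e = 1 := by
      rcases Nat.lt_or_ge e 2 with h2 | h2
      · right; omega
      · left
        calc 1 ≤ d := hd
        _ = d * 1 := (mul_one d).symm
        _ ≤ d * (e - 1) := Nat.mul_le_mul_left d (by omega)
    have hsd : s = d := by omega
    rw [hsd, Zex_top hd, map_mul, map_mul, map_inv, θP_ZbN hd,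
      LC hd he (Or.inl (Nat.zero_le _)), LC hd he hside]
    have hc : (pw : P' d e)⁻¹ * pz * pw = pz := by
      rw [mul_assoc, comm_wz.symm.eq, ← mul_assoc, inv_mul_cancel, one_mul]
    calc ((pv : P' d e) ^ ((0:ℕ):ℤ) * pw * pv ^ (-((0:ℕ):ℤ) - (d:ℤ)))⁻¹ *
          (pv ^ ((0:ℕ):ℤ) * pz * pv ^ (-((0:ℕ):ℤ) - 1)) *
          (pv ^ ((1:ℕ):ℤ) * pw * pv ^ (-((1:ℕ):ℤ) - (d:ℤ)))
        = pv ^ (d:ℤ) * (pw⁻¹ * pz * pw) * pv ^ (-(d:ℤ) - 1) := by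
          push_cast
          group
      _ = pv ^ (d:ℤ) * pz * pv ^ (-(d:ℤ) - 1) := by rw [hc]

end PhaseC

end TwoVertexTubular

namespace TwoVertexTubular

section PhaseD

open SemidirectProduct

variable {d e : ℕ}

lemma step_phi_hom (hd : 0 < d) (he : 0 < e) :
    (θP d e).comp (φf d e) = (MulAut.conj (pv : P' d e)).toMonoidHom.comp (θP d e) := by
  apply FreeGroup.ext_hom
  rintro (⟨⟩ | s | s) <;>
    simp only [MonoidHom.comp_apply, MulEquiv.coe_toMonoidHom, MulAut.conj_apply]
  · rw [show FreeGroup.of (Sum.inl () : Gen d e) = U d e from rfl, phi_U, θP_U]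
    symm
    calc pv * (pu * pv ^ (-(e:ℤ))) * pv⁻¹
        = (pv * pu) * (pv ^ (-(e:ℤ)) * pv⁻¹) := by group
      _ = (pu * pv) * (pv ^ (-(e:ℤ)) * pv⁻¹) := by rw [comm_uv.symm.eq]
      _ = pu * pv ^ (-(e:ℤ)) := by group
  · rw [show FreeGroup.of (Sum.inr (Sum.inl s) : Gen d e) = Zb d e s from rfl, phi_Zb, θP_Zb,
      LD hd he (Nat.succ_le_of_lt s.isLt)]
    push_cast
    group
  · rw [show FreeGroup.of (Sum.inr (Sum.inr s) : Gen d e) = Wb d e s from rfl, phi_Wb, θP_Wb,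
      LC hd he (Or.inl (Nat.succ_le_of_lt s.isLt))]
    push_cast
    group

lemma step_phi (hd : 0 < d) (he : 0 < e) (x : FF d e) :
    θP d e (φf d e x) = pv * θP d e x * pv⁻¹ := by
  have h := DFunLike.congr_fun (step_phi_hom hd he) x
  simpa using h

lemma step_psi (hd : 0 < d) (he : 0 < e) (x : FF d e) :
    θP d e (ψf d e x) = pv⁻¹ * θP d e x * pv := by
  have h1 := step_phi hd he (ψf d e x)
  have h2 : φf d e (ψf d e x) = x := by
    have := DFunLike.congr_fun (phi_psi hd he) x
    simpa using this
  rw [h2] at h1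
  rw [h1]
  group

lemma cond_pt (hd : 0 < d) (he : 0 < e) (n : ℤ) :
    ∀ x : FF d e, θP d e ((φaut hd he ^ n) x) = pv ^ n * θP d e x * pv ^ (-n) := by
  induction n using Int.induction_on with
  | zero => intro x; simp
  | succ n ih =>
    intro x
    have key : (φaut hd he ^ ((n:ℤ) + 1)) x = (φaut hd he ^ (n:ℤ)) (φf d e x) := by
      rw [zpow_add_one]
      rfl
    rw [key, ih (φf d e x), step_phi hd he]
    group
  | pred n ih =>
    intro x
    have key : (φaut hd he ^ (-(n:ℤ) - 1)) x = (φaut hd he ^ (-(n:ℤ))) (ψf d e x) := by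
      rw [zpow_sub_one]
      rfl
    rw [key, ih (ψf d e x), step_psi hd he]
    group

lemma cond (hd : 0 < d) (he : 0 < e) :
    ∀ g : Multiplicative ℤ,
      (θP d e).comp ((φz hd he g) : MulAut (FF d e)).toMonoidHom
        = (MulAut.conj ((zpowersHom (P' d e) pv) g)).toMonoidHom.comp (θP d e) := by
  intro g
  apply MonoidHom.ext
  intro x
  simp only [MonoidHom.comp_apply, MulEquiv.coe_toMonoidHom, MulAut.conj_apply]
  have hg : g = Multiplicative.ofAdd (Multiplicative.toAdd g) := rfl
  rw [hg, φz_apply, zpowersHom_apply, toAdd_ofAdd, cond_pt hd he, zpow_neg]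

/-- the homomorphism from the semidirect product back to the presented group -/
def ΨP (hd : 0 < d) (he : 0 < e) : MM hd he →* P' d e :=
  SemidirectProduct.lift (θP d e) (zpowersHom _ pv) (cond hd he)

lemma ΨP_mk (hd : 0 < d) (he : 0 < e) (n : FF d e) (g : Multiplicative ℤ) :
    ΨP hd he ⟨n, g⟩ = θP d e n * pv ^ (Multiplicative.toAdd g) := rfl

lemma ofAdd_zpow (a n : ℤ) :
    (Multiplicative.ofAdd a) ^ n = Multiplicative.ofAdd (n * a) := by
  rw [← ofAdd_zsmul, smul_eq_mul]

lemma ΦP_of (hd : 0 < d) (he : 0 < e) (i : Fin 4) :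
    ΦP hd he (PresentedGroup.of i) = mfun hd he i := PresentedGroup.toGroup.of (mfun_rels hd he)

lemma ΦP_pu (hd : 0 < d) (he : 0 < e) :
    ΦP hd he (pu : P' d e) = ⟨U d e, Multiplicative.ofAdd (e:ℤ)⟩ := ΦP_of hd he 0
lemma ΦP_pv (hd : 0 < d) (he : 0 < e) :
    ΦP hd he (pv : P' d e) = ⟨1, Multiplicative.ofAdd (1:ℤ)⟩ := ΦP_of hd he 1
lemma ΦP_pw (hd : 0 < d) (he : 0 < e) :
    ΦP hd he (pw : P' d e) = ⟨Wex d e 0, Multiplicative.ofAdd (d:ℤ)⟩ := ΦP_of hd he 2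
lemma ΦP_pz (hd : 0 < d) (he : 0 < e) :
    ΦP hd he (pz : P' d e) = ⟨ZbN d e 0, Multiplicative.ofAdd (1:ℤ)⟩ := ΦP_of hd he 3

lemma comp1 (hd : 0 < d) (he : 0 < e) :
    (ΨP hd he).comp (ΦP hd he) = MonoidHom.id (P' d e) := by
  apply PresentedGroup.ext
  intro x
  simp only [MonoidHom.comp_apply, MonoidHom.id_apply, ΦP_of]
  fin_cases x
  · show ΨP hd he (mfun hd he 0) = pu
    rw [show mfun hd he 0 = ⟨U d e, Multiplicative.ofAdd (e:ℤ)⟩ from rfl, ΨP_mk, θP_U,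
      toAdd_ofAdd]
    group
  · show ΨP hd he (mfun hd he 1) = pv
    rw [show mfun hd he 1 = ⟨1, Multiplicative.ofAdd (1:ℤ)⟩ from rfl, ΨP_mk, map_one,
      toAdd_ofAdd, one_mul, zpow_one]
  · show ΨP hd he (mfun hd he 2) = pw
    rw [show mfun hd he 2 = ⟨Wex d e 0, Multiplicative.ofAdd (d:ℤ)⟩ from rfl, ΨP_mk,
      LC hd he (s := 0) (Or.inl (Nat.zero_le _)), toAdd_ofAdd]
    push_cast
    group
  · show ΨP hd he (mfun hd he 3) = pz
    rw [show mfun hd he 3 = ⟨ZbN d e 0, Multiplicative.ofAdd (1:ℤ)⟩ from rfl, ΨP_mk,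
      θP_ZbN hd, toAdd_ofAdd]
    push_cast
    group

lemma conj_inr_mk (hd : 0 < d) (he : 0 < e) (a b : ℤ) (n : FF d e) :
    (inr (Multiplicative.ofAdd a) : MM hd he) * ⟨n, Multiplicative.ofAdd b⟩
        * inr (Multiplicative.ofAdd (-a - b))
      = ⟨(φz hd he) (Multiplicative.ofAdd a) n, 1⟩ := by
  refine SemidirectProduct.ext ?_ ?_
  · show (1 : FF d e) * (φz hd he) (Multiplicative.ofAdd a) n
        * (φz hd he) (Multiplicative.ofAdd a * Multiplicative.ofAdd b) 1
      = (φz hd he) (Multiplicative.ofAdd a) n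
    rw [map_one, one_mul, mul_one]
  · show Multiplicative.ofAdd a * Multiplicative.ofAdd b * Multiplicative.ofAdd (-a - b) = 1
    rw [← ofAdd_add, ← ofAdd_add]
    norm_num

lemma ΦP_pv_zpow (hd : 0 < d) (he : 0 < e) (n : ℤ) :
    ΦP hd he ((pv : P' d e) ^ n) = inr (Multiplicative.ofAdd n) := by
  rw [map_zpow, ΦP_pv,
    show (⟨1, Multiplicative.ofAdd (1:ℤ)⟩ : MM hd he) = inr (Multiplicative.ofAdd (1:ℤ)) from rfl,
    ← map_zpow, ofAdd_zpow, mul_one]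

lemma comp2 (hd : 0 < d) (he : 0 < e) :
    (ΦP hd he).comp (ΨP hd he) = MonoidHom.id (MM hd he) := by
  apply SemidirectProduct.hom_ext
  · apply FreeGroup.ext_hom
    rintro (⟨⟩ | s | s) <;>
      simp only [MonoidHom.comp_apply, MonoidHom.id_apply]
    · rw [show (FreeGroup.of (Sum.inl ()) : FF d e) = U d e from rfl]
      rw [show (inl (U d e) : MM hd he) = ⟨U d e, 1⟩ from rfl]
      rw [ΨP_mk, θP_U, toAdd_one, zpow_zero, mul_one, map_mul, ΦP_pu, ΦP_pv_zpow]
      refine SemidirectProduct.ext ?_ ?_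
      · show (U d e) * (φz hd he) (Multiplicative.ofAdd (e:ℤ)) 1 = U d e
        rw [map_one, mul_one]
      · show Multiplicative.ofAdd (e:ℤ) * Multiplicative.ofAdd (-(e:ℤ)) = 1
        rw [← ofAdd_add]
        norm_num
    · rw [show (FreeGroup.of (Sum.inr (Sum.inl s)) : FF d e) = Zb d e s from rfl]
      rw [show (inl (Zb d e s) : MM hd he) = ⟨Zb d e s, 1⟩ from rfl]
      rw [ΨP_mk, θP_Zb, toAdd_one, zpow_zero, mul_one, map_mul, map_mul, ΦP_pv_zpow,
        ΦP_pv_zpow, ΦP_pz]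
      rw [conj_inr_mk hd he (s.val:ℤ) 1 (ZbN d e 0)]
      have hleft : (φz hd he) (Multiplicative.ofAdd (s.val:ℤ)) (ZbN d e 0) = Zb d e s := by
        rw [φz_apply, zpow_natCast, iterZ hd he s.val (le_of_lt s.isLt), Zex_of_lt s.isLt,
          ZbN_of_lt s.isLt]
      rw [hleft]
    · rw [show (FreeGroup.of (Sum.inr (Sum.inr s)) : FF d e) = Wb d e s from rfl]
      rw [show (inl (Wb d e s) : MM hd he) = ⟨Wb d e s, 1⟩ from rfl]
      rw [ΨP_mk, θP_Wb, toAdd_one, zpow_zero, mul_one, map_mul, map_mul, ΦP_pv_zpow,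
        ΦP_pv_zpow, ΦP_pw]
      rw [conj_inr_mk hd he (s.val:ℤ) (d:ℤ) (Wex d e 0)]
      have hleft : (φz hd he) (Multiplicative.ofAdd (s.val:ℤ)) (Wex d e 0) = Wb d e s := by
        rw [φz_apply, zpow_natCast, iterW hd he s.val (Or.inl (le_of_lt s.isLt)),
          Wex_of_lt s.isLt, WbN_of_lt s.isLt]
      rw [hleft]
  · apply MonoidHom.ext_mint
    simp only [MonoidHom.comp_apply, MonoidHom.id_apply]
    rw [show (inr (Multiplicative.ofAdd (1:ℤ)) : MM hd he) = ⟨1, Multiplicative.ofAdd (1:ℤ)⟩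
      from rfl, ΨP_mk, map_one, one_mul, toAdd_ofAdd, zpow_one, ΦP_pv]

/-- the isomorphism between the presented group and the semidirect product -/
def isoPM (hd : 0 < d) (he : 0 < e) : P' d e ≃* MM hd he :=
  MonoidHom.toMulEquiv (ΦP hd he) (ΨP hd he) (comp1 hd he) (comp2 hd he)

end PhaseD

end TwoVertexTubular

namespace TwoVertexTubular

section Helpers

variable {G : Type*} [Group G] {g h : G}

lemma comm2 (hc : Commute g h) (a b c f : ℤ) : Commute (g ^ a * h ^ b) (g ^ c * h ^ f) := by
  have h1 : Commute (g ^ a) (g ^ c * h ^ f) :=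
    Commute.mul_right ((Commute.refl g).zpow_zpow a c) (hc.zpow_zpow a f)
  have h2 : Commute (h ^ b) (g ^ c * h ^ f) :=
    Commute.mul_right (hc.symm.zpow_zpow b c) ((Commute.refl h).zpow_zpow b f)
  exact h1.mul_left h2

lemma commpow (hc : Commute g h) (a b n : ℤ) :
    (g ^ a * h ^ b) ^ n = g ^ (a * n) * h ^ (b * n) := by
  rw [(hc.zpow_zpow a b).mul_zpow, ← zpow_mul, ← zpow_mul]

lemma commmul (hc : Commute g h) (a b c f : ℤ) :
    (g ^ a * h ^ b) * (g ^ c * h ^ f) = g ^ (a + c) * h ^ (b + f) := by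
  have h1 : h ^ b * g ^ c = g ^ c * h ^ b := (hc.symm.zpow_zpow b c).eq
  calc (g ^ a * h ^ b) * (g ^ c * h ^ f)
      = g ^ a * (h ^ b * g ^ c) * h ^ f := by group
    _ = g ^ a * (g ^ c * h ^ b) * h ^ f := by rw [h1]
    _ = g ^ (a + c) * h ^ (b + f) := by rw [zpow_add, zpow_add]; group

lemma commpowmul (hc : Commute g h) (a b c f m n : ℤ) :
    (g ^ a * h ^ b) ^ m * (g ^ c * h ^ f) ^ n
      = g ^ (a * m + c * n) * h ^ (b * m + f * n) := by
  rw [commpow hc, commpow hc, commmul hc]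

lemma pair_eval (hc : Commute g h) {a b : ℤ} (ha : a = 1) (hb : b = 0) :
    g ^ a * h ^ b = g := by
  rw [ha, hb, zpow_one, zpow_zero, mul_one]

lemma pair_eval' (hc : Commute g h) {a b : ℤ} (ha : a = 0) (hb : b = 1) :
    g ^ a * h ^ b = h := by
  rw [ha, hb, zpow_one, zpow_zero, one_mul]

end Helpers

section Layer1

/-- first Bézout datum -/
def ipz (i j : ℤ) : ℤ := i / (Int.gcd i j : ℤ)
def jpz (i j : ℤ) : ℤ := j / (Int.gcd i j : ℤ)
def qBz (i j : ℤ) : ℤ := Int.gcdA (ipz i j) (jpz i j)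
def pBz (i j : ℤ) : ℤ := -Int.gcdB (ipz i j) (jpz i j)

lemma gcd_mul_ipz (i j : ℤ) : (Int.gcd i j : ℤ) * ipz i j = i :=
  Int.mul_ediv_cancel' (Int.gcd_dvd_left i j)

lemma gcd_mul_jpz (i j : ℤ) : (Int.gcd i j : ℤ) * jpz i j = j :=
  Int.mul_ediv_cancel' (Int.gcd_dvd_right i j)

lemma detz (i j : ℤ) (h : 0 < Int.gcd i j) :
    ipz i j * qBz i j - jpz i j * pBz i j = 1 := by
  have hcop : Int.gcd (ipz i j) (jpz i j) = 1 := Int.gcd_div_gcd_div_gcd h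
  have hab := Int.gcd_eq_gcd_ab (ipz i j) (jpz i j)
  rw [hcop] at hab
  push_cast at hab
  rw [qBz, pBz]
  linarith [hab]

end Layer1

end TwoVertexTubular

namespace TwoVertexTubular

section Layer1b

variable (i j k l : ℤ)

abbrev P3 (i j k l : ℤ) := PresentedGroup (rels3 i j k l)

def pX : P3 i j k l := PresentedGroup.of 0
def pY : P3 i j k l := PresentedGroup.of 1
def pA : P3 i j k l := PresentedGroup.of 2
def pB3 : P3 i j k l := PresentedGroup.of 3

lemma commP_xy : Commute (pX i j k l) (pY i j k l) := by
  have h := relator_eq_one (show x3 * y3 * (y3 * x3)⁻¹ ∈ rels3 i j k l by left; rfl)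
  rw [map_mul, map_inv, map_mul] at h
  exact (mul_inv_eq_one.mp h)

lemma commP_ab : Commute (pA i j k l) (pB3 i j k l) := by
  have h := relator_eq_one (show a3 * b3 * (b3 * a3)⁻¹ ∈ rels3 i j k l by right; left; rfl)
  rw [map_mul, map_inv, map_mul] at h
  exact (mul_inv_eq_one.mp h)

lemma relP : (pX i j k l) ^ i * (pY i j k l) ^ j = (pA i j k l) ^ k * (pB3 i j k l) ^ l := by
  have h := relator_eq_one
    (show x3 ^ i * y3 ^ j * (a3 ^ k * b3 ^ l)⁻¹ ∈ rels3 i j k l by right; right; rfl)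
  simp only [map_mul, map_inv, map_zpow] at h
  exact (mul_inv_eq_one.mp h)

/-- images of x, y, a, b in `P'` -/
def f14 : Fin 4 → P' (Int.gcd i j) (Int.gcd k l) :=
  ![pu ^ qBz i j * pv ^ (-jpz i j), pu ^ (-pBz i j) * pv ^ ipz i j,
    pw ^ qBz k l * pz ^ (-jpz k l), pw ^ (-pBz k l) * pz ^ ipz k l]

lemma f14_0 : f14 i j k l 0 = pu ^ qBz i j * pv ^ (-jpz i j) := rfl
lemma f14_1 : f14 i j k l 1 = pu ^ (-pBz i j) * pv ^ ipz i j := rfl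
lemma f14_2 : f14 i j k l 2 = pw ^ qBz k l * pz ^ (-jpz k l) := rfl
lemma f14_3 : f14 i j k l 3 = pw ^ (-pBz k l) * pz ^ ipz k l := rfl

/-- images of u, v, w, z in `P3` -/
def g14 : Fin 4 → P3 i j k l :=
  ![(pX i j k l) ^ ipz i j * (pY i j k l) ^ jpz i j,
    (pX i j k l) ^ pBz i j * (pY i j k l) ^ qBz i j,
    (pA i j k l) ^ ipz k l * (pB3 i j k l) ^ jpz k l,
    (pA i j k l) ^ pBz k l * (pB3 i j k l) ^ qBz k l]

lemma g14_0 : g14 i j k l 0 = (pX i j k l) ^ ipz i j * (pY i j k l) ^ jpz i j := rfl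
lemma g14_1 : g14 i j k l 1 = (pX i j k l) ^ pBz i j * (pY i j k l) ^ qBz i j := rfl
lemma g14_2 : g14 i j k l 2 = (pA i j k l) ^ ipz k l * (pB3 i j k l) ^ jpz k l := rfl
lemma g14_3 : g14 i j k l 3 = (pA i j k l) ^ pBz k l * (pB3 i j k l) ^ qBz k l := rfl

lemma f14_rels (hd : 0 < Int.gcd i j) (he : 0 < Int.gcd k l) :
    ∀ r ∈ rels3 i j k l, FreeGroup.lift (f14 i j k l) r = 1 := by
  intro r hr
  rcases hr with rfl | rfl | rfl
  · simp only [map_mul, map_inv, x3, y3, FreeGroup.lift_apply_of]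
    rw [mul_inv_eq_one, f14_0, f14_1]
    exact (comm2 comm_uv _ _ _ _).eq
  · simp only [map_mul, map_inv, a3, b3, FreeGroup.lift_apply_of]
    rw [mul_inv_eq_one, f14_2, f14_3]
    exact (comm2 comm_wz _ _ _ _).eq
  · simp only [map_mul, map_inv, map_zpow, x3, y3, a3, b3, FreeGroup.lift_apply_of]
    rw [mul_inv_eq_one, f14_0, f14_1, f14_2, f14_3, commpowmul comm_uv, commpowmul comm_wz]
    have e1 : qBz i j * i + -pBz i j * j = (Int.gcd i j : ℤ) := by
      linear_combination (-(qBz i j)) * gcd_mul_ipz i j + pBz i j * gcd_mul_jpz i j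
        + (Int.gcd i j : ℤ) * detz i j hd
    have e2 : -jpz i j * i + ipz i j * j = 0 := by
      linear_combination (jpz i j) * gcd_mul_ipz i j + (-(ipz i j)) * gcd_mul_jpz i j
    have e3 : qBz k l * k + -pBz k l * l = (Int.gcd k l : ℤ) := by
      linear_combination (-(qBz k l)) * gcd_mul_ipz k l + pBz k l * gcd_mul_jpz k l
        + (Int.gcd k l : ℤ) * detz k l he
    have e4 : -jpz k l * k + ipz k l * l = 0 := by
      linear_combination (jpz k l) * gcd_mul_ipz k l + (-(ipz k l)) * gcd_mul_jpz k l
    rw [e1, e2, e3, e4, zpow_zero, zpow_zero, mul_one, mul_one]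
    rw [zpow_natCast, zpow_natCast]
    exact rel_uw

lemma g14_rels (hd : 0 < Int.gcd i j) (he : 0 < Int.gcd k l) :
    ∀ r ∈ rels' (Int.gcd i j) (Int.gcd k l), FreeGroup.lift (g14 i j k l) r = 1 := by
  intro r hr
  rcases hr with rfl | rfl | rfl
  · simp only [map_mul, map_inv, gu, gv, FreeGroup.lift_apply_of]
    rw [mul_inv_eq_one, g14_0, g14_1]
    exact (comm2 (commP_xy i j k l) _ _ _ _).eq
  · simp only [map_mul, map_inv, gw, gz, FreeGroup.lift_apply_of]
    rw [mul_inv_eq_one, g14_2, g14_3]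
    exact (comm2 (commP_ab i j k l) _ _ _ _).eq
  · simp only [map_mul, map_inv, map_pow, gu, gw, FreeGroup.lift_apply_of]
    rw [mul_inv_eq_one, g14_0, g14_2,
      ← zpow_natCast ((pX i j k l) ^ ipz i j * (pY i j k l) ^ jpz i j) (Int.gcd i j),
      ← zpow_natCast ((pA i j k l) ^ ipz k l * (pB3 i j k l) ^ jpz k l) (Int.gcd k l),
      commpow (commP_xy i j k l), commpow (commP_ab i j k l),
      show ipz i j * (Int.gcd i j : ℤ) = i from by rw [mul_comm]; exact gcd_mul_ipz i j,
      show jpz i j * (Int.gcd i j : ℤ) = j from by rw [mul_comm]; exact gcd_mul_jpz i j,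
      show ipz k l * (Int.gcd k l : ℤ) = k from by rw [mul_comm]; exact gcd_mul_ipz k l,
      show jpz k l * (Int.gcd k l : ℤ) = l from by rw [mul_comm]; exact gcd_mul_jpz k l]
    exact relP i j k l

def L1 (hd : 0 < Int.gcd i j) (he : 0 < Int.gcd k l) :
    P3 i j k l →* P' (Int.gcd i j) (Int.gcd k l) :=
  PresentedGroup.toGroup (f14_rels i j k l hd he)

def L2 (hd : 0 < Int.gcd i j) (he : 0 < Int.gcd k l) :
    P' (Int.gcd i j) (Int.gcd k l) →* P3 i j k l :=
  PresentedGroup.toGroup (g14_rels i j k l hd he)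

variable (hd : 0 < Int.gcd i j) (he : 0 < Int.gcd k l)

lemma L1_of (x : Fin 4) : L1 i j k l hd he (PresentedGroup.of x) = f14 i j k l x :=
  PresentedGroup.toGroup.of _

lemma L2_of (x : Fin 4) : L2 i j k l hd he (PresentedGroup.of x) = g14 i j k l x :=
  PresentedGroup.toGroup.of _

lemma L2_pu : L2 i j k l hd he pu = g14 i j k l 0 := L2_of i j k l hd he 0
lemma L2_pv : L2 i j k l hd he pv = g14 i j k l 1 := L2_of i j k l hd he 1
lemma L2_pw : L2 i j k l hd he pw = g14 i j k l 2 := L2_of i j k l hd he 2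
lemma L2_pz : L2 i j k l hd he pz = g14 i j k l 3 := L2_of i j k l hd he 3

lemma L1_pX : L1 i j k l hd he (pX i j k l) = f14 i j k l 0 := L1_of i j k l hd he 0
lemma L1_pY : L1 i j k l hd he (pY i j k l) = f14 i j k l 1 := L1_of i j k l hd he 1
lemma L1_pA : L1 i j k l hd he (pA i j k l) = f14 i j k l 2 := L1_of i j k l hd he 2
lemma L1_pB3 : L1 i j k l hd he (pB3 i j k l) = f14 i j k l 3 := L1_of i j k l hd he 3

lemma c1L : (L2 i j k l hd he).comp (L1 i j k l hd he) = MonoidHom.id (P3 i j k l) := by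
  apply PresentedGroup.ext
  intro x
  simp only [MonoidHom.comp_apply, MonoidHom.id_apply, L1_of]
  fin_cases x
  · show L2 i j k l hd he (f14 i j k l 0) = pX i j k l
    rw [f14_0, map_mul, map_zpow, map_zpow, L2_pu, L2_pv, g14_0, g14_1,
      commpowmul (commP_xy i j k l)]
    refine pair_eval (commP_xy i j k l) ?_ ?_
    · linear_combination detz i j hd
    · ring
  · show L2 i j k l hd he (f14 i j k l 1) = pY i j k l
    rw [f14_1, map_mul, map_zpow, map_zpow, L2_pu, L2_pv, g14_0, g14_1,
      commpowmul (commP_xy i j k l)]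
    refine pair_eval' (commP_xy i j k l) ?_ ?_
    · ring
    · linear_combination detz i j hd
  · show L2 i j k l hd he (f14 i j k l 2) = pA i j k l
    rw [f14_2, map_mul, map_zpow, map_zpow, L2_pw, L2_pz, g14_2, g14_3,
      commpowmul (commP_ab i j k l)]
    refine pair_eval (commP_ab i j k l) ?_ ?_
    · linear_combination detz k l he
    · ring
  · show L2 i j k l hd he (f14 i j k l 3) = pB3 i j k l
    rw [f14_3, map_mul, map_zpow, map_zpow, L2_pw, L2_pz, g14_2, g14_3,
      commpowmul (commP_ab i j k l)]
    refine pair_eval' (commP_ab i j k l) ?_ ?_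
    · ring
    · linear_combination detz k l he

lemma c2L : (L1 i j k l hd he).comp (L2 i j k l hd he) = MonoidHom.id _ := by
  apply PresentedGroup.ext
  intro x
  simp only [MonoidHom.comp_apply, MonoidHom.id_apply, L2_of]
  fin_cases x
  · show L1 i j k l hd he (g14 i j k l 0) = pu
    rw [g14_0, map_mul, map_zpow, map_zpow, L1_pX, L1_pY, f14_0, f14_1, commpowmul comm_uv]
    refine pair_eval comm_uv ?_ ?_
    · linear_combination detz i j hd
    · ring
  · show L1 i j k l hd he (g14 i j k l 1) = pv
    rw [g14_1, map_mul, map_zpow, map_zpow, L1_pX, L1_pY, f14_0, f14_1, commpowmul comm_uv]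
    refine pair_eval' comm_uv ?_ ?_
    · ring
    · linear_combination detz i j hd
  · show L1 i j k l hd he (g14 i j k l 2) = pw
    rw [g14_2, map_mul, map_zpow, map_zpow, L1_pA, L1_pB3, f14_2, f14_3, commpowmul comm_wz]
    refine pair_eval comm_wz ?_ ?_
    · linear_combination detz k l he
    · ring
  · show L1 i j k l hd he (g14 i j k l 3) = pz
    rw [g14_3, map_mul, map_zpow, map_zpow, L1_pA, L1_pB3, f14_2, f14_3, commpowmul comm_wz]
    refine pair_eval' comm_wz ?_ ?_
    · ring
    · linear_combination detz k l he

/-- the change-of-basis isomorphism -/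
def iso1 : P3 i j k l ≃* P' (Int.gcd i j) (Int.gcd k l) :=
  MonoidHom.toMulEquiv (L1 i j k l hd he) (L2 i j k l hd he) (c1L i j k l hd he)
    (c2L i j k l hd he)

end Layer1b

end TwoVertexTubular

open TwoVertexTubular SemidirectProduct in
/-- The two-vertex instance of Corollary 2.3: the amalgam of two copies of ℤ² over a
nontrivial cyclic subgroup is (finite rank free)-by-ℤ: it has a normal subgroup `N`
isomorphic to a free group of finite rank such that `G/N ≅ ℤ` (the latter expressed by a
surjective homomorphism onto ℤ with kernel exactly `N`). -/
theorem two_vertex_tubular_free_by_Z (i j k l : ℤ)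
    (hij : (i, j) ≠ (0, 0)) (hkl : (k, l) ≠ (0, 0)) :
    ∃ N : Subgroup (PresentedGroup (rels3 i j k l)), N.Normal ∧
      (∃ n : ℕ, Nonempty (N ≃* FreeGroup (Fin n))) ∧
      ∃ χ : PresentedGroup (rels3 i j k l) →* Multiplicative ℤ,
        Function.Surjective χ ∧ χ.ker = N := by
  have hd : 0 < Int.gcd i j := by
    rw [Int.gcd_pos_iff]
    by_contra hcon
    push_neg at hcon
    exact hij (by rw [hcon.1, hcon.2])
  have he : 0 < Int.gcd k l := by
    rw [Int.gcd_pos_iff]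
    by_contra hcon
    push_neg at hcon
    exact hkl (by rw [hcon.1, hcon.2])
  let iso : P3 i j k l ≃* MM hd he := (iso1 i j k l hd he).trans (isoPM hd he)
  let χ : PresentedGroup (rels3 i j k l) →* Multiplicative ℤ :=
    (rightHom : MM hd he →* Multiplicative ℤ).comp iso.toMonoidHom
  refine ⟨χ.ker, inferInstance, ?_, χ, ?_, rfl⟩
  · refine ⟨Fintype.card (Gen (Int.gcd i j) (Int.gcd k l)), ⟨?_⟩⟩
    have hker : Subgroup.map iso.toMonoidHom χ.ker
        = (rightHom : MM hd he →* Multiplicative ℤ).ker := by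
      have h1 : χ.ker = Subgroup.comap iso.toMonoidHom
          (rightHom : MM hd he →* Multiplicative ℤ).ker := by
        rw [MonoidHom.comap_ker]
      rw [h1, Subgroup.map_comap_eq_self_of_surjective iso.surjective]
    exact (Subgroup.equivMapOfInjective _ iso.toMonoidHom iso.injective).trans
      ((MulEquiv.subgroupCongr (hker.trans range_inl_eq_ker_rightHom.symm)).trans
        (((MonoidHom.ofInjective inl_injective).symm).trans
          (FreeGroup.freeGroupCongr (Fintype.equivFin _))))
  · intro n
    obtain ⟨m, hm⟩ := rightHom_surjective (φ := φz hd he) n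
    refine ⟨iso.symm m, ?_⟩
    show rightHom (iso (iso.symm m)) = n
    rw [MulEquiv.apply_symm_apply, hm]
end

section
/- Let m and n be nonzero integers with |m| ≠ |n|, and let G be a group containing a subgroup isomorphic to the Baumslag–Solitar group BS(m,n), i.e., the group presented by generators a, t and the single relator t aᵐ t⁻¹ = aⁿ. Then no finite-index subgroup H of G satisfies the strongest Tits alternative; that is, every finite-index subgroup H of G contains a subgroup which neither admits a surjective homomorphism onto the free group F₂ of rank 2 nor is torsion-free abelian. -/
/-- The Baumslag–Solitar group `BS(m,n) = ⟨a, t | t aᵐ t⁻¹ = aⁿ⟩`, with `a` the 0th and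
`t` the 1st generator. -/
def BaumslagSolitar (m n : ℤ) : Type :=
  PresentedGroup ({FreeGroup.of 1 * (FreeGroup.of 0 : FreeGroup (Fin 2)) ^ m *
    (FreeGroup.of 1)⁻¹ * ((FreeGroup.of 0 : FreeGroup (Fin 2)) ^ n)⁻¹} :
      Set (FreeGroup (Fin 2)))

instance (m n : ℤ) : Group (BaumslagSolitar m n) := by
  unfold BaumslagSolitar; infer_instance

/-- A subgroup surjects the free group of rank 2. -/
def SurjectsF2 (S : Type) [Group S] : Prop :=
  ∃ f : S →* FreeGroup (Fin 2), Function.Surjective f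

/-- A group is torsion-free abelian. -/
def TorsionFreeAbelian (S : Type) [Group S] : Prop :=
  (∀ a b : S, a * b = b * a) ∧ ∀ g : S, g ≠ 1 → ∀ n : ℕ, 0 < n → g ^ n ≠ 1

lemma addRight_zpow (z : ℤ) : (Equiv.addRight (1:ℚ)) ^ z = Equiv.addRight (z:ℚ) := by
  have hp : ∀ j : ℕ, (Equiv.addRight (1:ℚ)) ^ j = Equiv.addRight (j:ℚ) := by
    intro j
    induction j with
    | zero => ext x; simp
    | succ k ih => ext x; simp [pow_succ, ih, Equiv.Perm.mul_apply]; ring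
  obtain ⟨j, rfl | rfl⟩ := Int.eq_nat_or_neg z
  · rw [zpow_natCast, hp]; norm_num
  · rw [zpow_neg, zpow_natCast, hp]
    ext x
    simp [Equiv.Perm.inv_def]

noncomputable def BSrep (m n : ℤ) (hm : m ≠ 0) (hn : n ≠ 0) :
    BaumslagSolitar m n →* Equiv.Perm ℚ :=
  PresentedGroup.toGroup (f := ![Equiv.addRight (1:ℚ), Equiv.mulRight₀ ((n:ℚ)/m)
      (div_ne_zero (Int.cast_ne_zero.2 hn) (Int.cast_ne_zero.2 hm))]) (by
    intro r hr
    rw [Set.mem_singleton_iff] at hr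
    subst hr
    simp only [map_mul, map_zpow, map_inv, FreeGroup.lift_apply_of, Matrix.cons_val_zero,
      Matrix.cons_val_one, Matrix.head_cons]
    rw [addRight_zpow, addRight_zpow]
    ext x
    have hm' : (m:ℚ) ≠ 0 := Int.cast_ne_zero.2 hm
    simp [Equiv.Perm.mul_apply, Equiv.Perm.inv_def]
    field_simp
    ring)

lemma a_zpow_ne_one (m n : ℤ) (hm : m ≠ 0) (hn : n ≠ 0) (l : ℤ) (hl : l ≠ 0) :
    (PresentedGroup.of 0 : BaumslagSolitar m n) ^ l ≠ 1 := by
  intro h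
  have h2 := congrArg (BSrep m n hm hn) h
  erw [map_zpow, map_one,
    show BSrep m n hm hn (PresentedGroup.of 0) = Equiv.addRight (1:ℚ) from
      PresentedGroup.toGroup.of _, addRight_zpow] at h2
  have h3 := congrArg (fun e : Equiv.Perm ℚ => e 0) h2
  simp at h3
  exact hl (by exact_mod_cast h3)

lemma BS_relation (m n : ℤ) :
    (PresentedGroup.of 1 : BaumslagSolitar m n) * (PresentedGroup.of 0) ^ m *
      (PresentedGroup.of 1)⁻¹ * ((PresentedGroup.of 0) ^ n)⁻¹ = 1 := by
  have h : PresentedGroup.mk _ (FreeGroup.of 1 * (FreeGroup.of 0 : FreeGroup (Fin 2)) ^ m *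
      (FreeGroup.of 1)⁻¹ * ((FreeGroup.of 0) ^ n)⁻¹) = (1 : BaumslagSolitar m n) :=
    (QuotientGroup.eq_one_iff _).mpr (Subgroup.subset_normalClosure (Set.mem_singleton _))
  simp only [map_mul, map_zpow, map_inv, PresentedGroup.of] at h ⊢
  exact h

noncomputable def F2ab : FreeGroup (Fin 2) →* Multiplicative (ℤ × ℤ) :=
  FreeGroup.lift ![Multiplicative.ofAdd ((1:ℤ), (0:ℤ)), Multiplicative.ofAdd ((0:ℤ), (1:ℤ))]

lemma F2ab_surjective : Function.Surjective (F2ab) := by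
  intro z
  refine ⟨(FreeGroup.of 0) ^ (Multiplicative.toAdd z).1 *
    (FreeGroup.of 1) ^ (Multiplicative.toAdd z).2, ?_⟩
  simp only [F2ab, map_mul, map_zpow, FreeGroup.lift_apply_of, Matrix.cons_val_zero,
    Matrix.cons_val_one, Matrix.head_cons]
  apply Multiplicative.toAdd.injective
  simp [toAdd_zpow, Prod.ext_iff]

/-- If a group contains a non-Euclidean Baumslag–Solitar subgroup, then no finite-index
subgroup satisfies the strongest Tits alternative: every finite-index subgroup `H` has a
subgroup which neither surjects `F₂` nor is torsion-free abelian. -/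
theorem no_strongest_Tits_with_nonEuclidean_BS {G : Type} [Group G] (m n : ℤ)
    (hm : m ≠ 0) (hn : n ≠ 0) (hmn : |m| ≠ |n|)
    (hBS : ∃ K : Subgroup G, Nonempty (K ≃* BaumslagSolitar m n)) :
    ∀ H : Subgroup G, H.FiniteIndex →
      ∃ S : Subgroup H, ¬ SurjectsF2 S ∧ ¬ TorsionFreeAbelian S := by
  obtain ⟨K, ⟨e⟩⟩ := hBS
  intro H hH
  set ψ : BaumslagSolitar m n →* G := K.subtype.comp e.symm.toMonoidHom with hψdef
  have hψinj : Function.Injective ψ := K.subtype_injective.comp e.symm.injective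
  set A : G := ψ (PresentedGroup.of 0) with hA
  set T : G := ψ (PresentedGroup.of 1) with hT
  have hrelG : T * A ^ m * T⁻¹ * (A ^ n)⁻¹ = 1 := by
    have h := congrArg ψ (BS_relation m n)
    erw [map_mul, map_mul, map_mul, map_inv, map_inv, map_zpow, map_zpow, map_one] at h
    exact h
  have hrel1 : T * A ^ m * T⁻¹ = A ^ n := mul_inv_eq_one.mp hrelG
  have hrelj : ∀ j : ℤ, T * A ^ (m * j) * T⁻¹ = A ^ (n * j) := by
    intro j
    rw [zpow_mul, zpow_mul, ← hrel1, conj_zpow]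
  have hrelk : ∀ k : ℕ, ∀ j : ℤ, T ^ k * A ^ ((m:ℤ) ^ k * j) * (T ^ k)⁻¹ = A ^ ((n:ℤ) ^ k * j) := by
    intro k
    induction k with
    | zero => intro j; simp
    | succ k ih =>
      intro j
      have h1 : (m:ℤ) ^ (k+1) * j = m ^ k * (m * j) := by ring
      rw [h1, pow_succ]
      calc T ^ k * T * A ^ ((m:ℤ) ^ k * (m * j)) * (T ^ k * T)⁻¹
          = T ^ k * (T * A ^ (m * ((m:ℤ) ^ k * j)) * T⁻¹) * (T ^ k)⁻¹ := by
            rw [show (m:ℤ) ^ k * (m * j) = m * ((m:ℤ) ^ k * j) by ring]; group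
        _ = T ^ k * A ^ ((m:ℤ) ^ k * (n * j)) * (T ^ k)⁻¹ := by
            rw [hrelj ((m:ℤ) ^ k * j), show n * ((m:ℤ) ^ k * j) = (m:ℤ) ^ k * (n * j) by ring]
        _ = A ^ ((n:ℤ) ^ k * (n * j)) := ih _
        _ = A ^ ((n:ℤ) ^ (k+1) * j) := by rw [show (n:ℤ) ^ k * (n * j) = (n:ℤ) ^ (k+1) * j by ring]
  obtain ⟨k, hk0, -, hTk⟩ := Subgroup.exists_pow_mem_of_index_ne_zero hH.index_ne_zero T
  obtain ⟨l, hl0, -, hAl⟩ := Subgroup.exists_pow_mem_of_index_ne_zero hH.index_ne_zero A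
  set s : G := T ^ k with hs
  set b : G := A ^ (l:ℤ) with hb
  have hbH : b ∈ H := by rw [hb, zpow_natCast]; exact hAl
  set M : ℤ := (m:ℤ) ^ k with hM
  set N : ℤ := (n:ℤ) ^ k with hN
  have hMN : M ≠ N := by
    intro h
    have habs : |m| ^ k = |n| ^ k := by rw [← abs_pow, ← abs_pow]; exact congrArg abs h
    rcases lt_trichotomy |m| |n| with hlt | heq | hgt
    · exact absurd habs (ne_of_lt (pow_lt_pow_left₀ hlt (abs_nonneg m) hk0.ne'))
    · exact hmn heq
    · exact absurd habs.symm (ne_of_lt (pow_lt_pow_left₀ hgt (abs_nonneg n) hk0.ne'))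
  have hbMz : b ^ M = A ^ (M * (l:ℤ)) := by rw [hb, ← zpow_mul, mul_comm]
  have hbNz : b ^ N = A ^ (N * (l:ℤ)) := by rw [hb, ← zpow_mul, mul_comm]
  have hrelsb : s * b ^ M * s⁻¹ = b ^ N := by
    rw [hbMz, hbNz, hs, hM, hN]; exact hrelk k (l:ℤ)
  set s' : H := ⟨s, hTk⟩ with hs'
  set b' : H := ⟨b, hbH⟩ with hb'
  set S : Subgroup H := Subgroup.closure {s', b'} with hS
  have hs'S : s' ∈ S := Subgroup.subset_closure (Set.mem_insert _ _)
  have hb'S : b' ∈ S := Subgroup.subset_closure (Set.mem_insert_iff.mpr (Or.inr rfl))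
  set σ : S := ⟨s', hs'S⟩ with hσ
  set β : S := ⟨b', hb'S⟩ with hβ
  have hrelS : σ * β ^ M * σ⁻¹ = β ^ N := by
    apply Subtype.ext; apply Subtype.ext
    push_cast
    exact hrelsb
  refine ⟨S, ?_, ?_⟩
  · rintro ⟨f, hf⟩
    set g : S →* Multiplicative (ℤ × ℤ) := F2ab.comp f with hg
    have hgsurj : Function.Surjective g := F2ab_surjective.comp hf
    have hrelg : g σ * g β ^ M * (g σ)⁻¹ = g β ^ N := by
      rw [← map_zpow, ← map_zpow, ← map_inv, ← map_mul, ← map_mul, hrelS]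
    rw [mul_inv_cancel_comm] at hrelg
    have hβ1 : g β = 1 := by
      have h3 : g β ^ (M - N) = 1 := by rw [zpow_sub, hrelg, mul_inv_cancel]
      have h4 : (M - N) • (Multiplicative.toAdd (g β)) = 0 := by
        rw [← toAdd_zpow, h3, toAdd_one]
      have h5 := (smul_eq_zero.mp h4).resolve_left (sub_ne_zero.mpr hMN)
      exact Multiplicative.toAdd.injective (by simpa using h5)
    have hzp : ∀ x : S, ∃ j : ℤ, g x = g σ ^ j := by
      rintro ⟨x, hx⟩
      induction hx using Subgroup.closure_induction with
      | mem y hy =>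
        rcases hy with h | h
        · exact ⟨1, by rw [zpow_one]; exact congrArg g (Subtype.ext h)⟩
        · refine ⟨0, ?_⟩
          rw [zpow_zero, show (⟨y, _⟩ : S) = β from Subtype.ext h]
          exact hβ1
      | one => exact ⟨0, by rw [zpow_zero]; exact map_one g⟩
      | mul x y hx hy ihx ihy =>
        obtain ⟨j1, h1⟩ := ihx
        obtain ⟨j2, h2⟩ := ihy
        exact ⟨j1 + j2, by rw [zpow_add, ← h1, ← h2, ← map_mul]; rfl⟩
      | inv x hx ihx =>
        obtain ⟨j1, h1⟩ := ihx
        exact ⟨-j1, by rw [zpow_neg, ← h1, ← map_inv]; rfl⟩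
    obtain ⟨x1, hx1⟩ := hgsurj (Multiplicative.ofAdd ((1:ℤ), (0:ℤ)))
    obtain ⟨x2, hx2⟩ := hgsurj (Multiplicative.ofAdd ((0:ℤ), (1:ℤ)))
    obtain ⟨j1, hj1⟩ := hzp x1
    obtain ⟨j2, hj2⟩ := hzp x2
    set v : ℤ × ℤ := Multiplicative.toAdd (g σ) with hv
    have e1 : ((1:ℤ), (0:ℤ)) = j1 • v := by
      have h := hx1 ▸ hj1
      have h2 := congrArg Multiplicative.toAdd h
      simpa [toAdd_zpow] using h2
    have e2 : ((0:ℤ), (1:ℤ)) = j2 • v := by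
      have h := hx2 ▸ hj2
      have h2 := congrArg Multiplicative.toAdd h
      simpa [toAdd_zpow] using h2
    have e11 : (1:ℤ) = j1 * v.1 := by
      have := congrArg Prod.fst e1; simpa [smul_eq_mul] using this
    have e12 : (0:ℤ) = j1 * v.2 := by
      have := congrArg Prod.snd e1; simpa [smul_eq_mul] using this
    have e22 : (1:ℤ) = j2 * v.2 := by
      have := congrArg Prod.snd e2; simpa [smul_eq_mul] using this
    have hj1ne : j1 ≠ 0 := by rintro rfl; simp at e11
    have hv2 : v.2 = 0 := by
      rcases mul_eq_zero.mp e12.symm with h | h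
      · exact absurd h hj1ne
      · exact h
    rw [hv2, mul_zero] at e22
    exact one_ne_zero e22
  · rintro ⟨habel, htf⟩
    have hcomm : s * b = b * s := by
      have h1 := habel σ β
      have h2 := congrArg (fun x : S => ((x : H) : G)) h1
      simpa using h2
    have hbMN : b ^ (M - N) = 1 := by
      have h2 : b ^ M = b ^ N := by
        rw [← hrelsb, (Commute.zpow_right hcomm M).eq, mul_inv_cancel_right]
      rw [zpow_sub, h2, mul_inv_cancel]
    have hbne : b ≠ 1 := by
      intro hb1
      apply a_zpow_ne_one m n hm hn (l:ℤ) (by exact_mod_cast hl0.ne')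
      apply hψinj
      erw [map_zpow, map_one]
      exact hb1
    have hβne : β ≠ 1 := by
      intro h
      apply hbne
      have h2 := congrArg (fun x : S => ((x : H) : G)) h
      exact h2
    refine htf β hβne (M - N).natAbs (Int.natAbs_pos.mpr (sub_ne_zero.mpr hMN)) ?_
    apply Subtype.ext; apply Subtype.ext
    push_cast
    rcases Int.natAbs_eq (M - N) with h | h
    · rw [← zpow_natCast, ← h, hbMN]
    · rw [← zpow_natCast, show (((M - N).natAbs : ℤ)) = -(M - N) by omega, zpow_neg, hbMN, inv_one]
end

section
/- Let i, j, k be integers with i ≠ 0 and (j,k) ≠ (0,0), and let G be the group presented by generators x, y, t and relators xy = yx, t xⁱ t⁻¹ = xʲyᵏ. Then G admits a surjective group homomorphism onto the free group F₂ of rank 2 if and only if k = 0. -/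
/-- The integer Heisenberg group. -/
@[ext] structure Heis where
  a : ℤ
  b : ℤ
  c : ℤ

namespace Heis

instance : Mul Heis := ⟨fun z w => ⟨z.a + w.a, z.b + w.b, z.c + w.c + z.a * w.b⟩⟩
instance : One Heis := ⟨⟨0, 0, 0⟩⟩
instance : Inv Heis := ⟨fun z => ⟨-z.a, -z.b, z.a * z.b - z.c⟩⟩

@[simp] lemma mul_a (z w : Heis) : (z * w).a = z.a + w.a := rfl
@[simp] lemma mul_b (z w : Heis) : (z * w).b = z.b + w.b := rfl
@[simp] lemma mul_c (z w : Heis) : (z * w).c = z.c + w.c + z.a * w.b := rfl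
@[simp] lemma one_a : (1 : Heis).a = 0 := rfl
@[simp] lemma one_b : (1 : Heis).b = 0 := rfl
@[simp] lemma one_c : (1 : Heis).c = 0 := rfl
@[simp] lemma inv_a (z : Heis) : z⁻¹.a = -z.a := rfl
@[simp] lemma inv_b (z : Heis) : z⁻¹.b = -z.b := rfl
@[simp] lemma inv_c (z : Heis) : z⁻¹.c = z.a * z.b - z.c := rfl

instance : Group Heis where
  mul_assoc x y z := by ext <;> simp <;> ring
  one_mul x := by ext <;> simp
  mul_one x := by ext <;> simp
  inv_mul_cancel x := by ext <;> simp

lemma zpow_a (z : Heis) (m : ℤ) : (z ^ m).a = m * z.a ∧ (z ^ m).b = m * z.b := by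
  induction m using Int.induction_on with
  | zero => simp
  | succ n ih => rw [zpow_add_one]; simp only [mul_a, mul_b, ih.1, ih.2]; constructor <;> ring
  | pred n ih => rw [zpow_sub_one]; simp only [mul_a, mul_b, inv_a, inv_b, ih.1, ih.2]
                 constructor <;> ring

def alphaH : Heis := ⟨1, 0, 0⟩
def betaH : Heis := ⟨0, 1, 0⟩

lemma alpha_beta_ne : alphaH * betaH ≠ betaH * alphaH := by
  intro h
  have := congrArg Heis.c h
  simp [alphaH, betaH] at this

end Heis

open Heis

/-- In a free group, generators only commute with themselves. -/
lemma eq_of_commute_of {ι : Type*} {u v : ι}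
    (h : Commute (FreeGroup.of u) (FreeGroup.of v)) : u = v := by
  classical
  by_contra hne
  have h2 := congrArg (FreeGroup.lift (fun x : ι => if x = u then alphaH else betaH)) h.eq
  rw [map_mul, map_mul, FreeGroup.lift_apply_of, FreeGroup.lift_apply_of, if_pos rfl,
    if_neg (fun hh : v = u => hne hh.symm)] at h2
  exact alpha_beta_ne h2

/-- Every element of a free group on a subsingleton type is a power of a fixed generator. -/
lemma freeGroup_zpow_of_subsingleton {ι : Type*} [Subsingleton ι] (g₀ : ι)
    (w : FreeGroup ι) : ∃ z : ℤ, w = FreeGroup.of g₀ ^ z := by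
  induction w using FreeGroup.induction_on with
  | C1 => exact ⟨0, by simp⟩
  | of x => exact ⟨1, by rw [Subsingleton.elim x g₀]; simp⟩
  | inv_of x _ => exact ⟨-1, by rw [Subsingleton.elim x g₀]; simp⟩
  | mul x y hx hy =>
    obtain ⟨zx, rfl⟩ := hx; obtain ⟨zy, rfl⟩ := hy
    exact ⟨zx + zy, (zpow_add _ _ _).symm⟩

lemma freeGroup_eq_one_of_isEmpty {ι : Type*} [IsEmpty ι] (w : FreeGroup ι) : w = 1 := by
  induction w using FreeGroup.induction_on with
  | C1 => rfl
  | of x => exact (IsEmpty.false x).elim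
  | inv_of x _ => exact (IsEmpty.false x).elim
  | mul x y hx hy => rw [hx, hy, one_mul]

/-- Commuting elements of a free group are powers of a common element. -/
lemma common_root {X Y : FreeGroup (Fin 2)} (h : Commute X Y) :
    ∃ (c : FreeGroup (Fin 2)) (a b : ℤ), X = c ^ a ∧ Y = c ^ b := by
  classical
  set S : Set (FreeGroup (Fin 2)) := {X, Y} with hS
  set H : Subgroup (FreeGroup (Fin 2)) := Subgroup.closure S with hH
  have hXH : X ∈ H := Subgroup.subset_closure (by simp [hS])
  have hYH : Y ∈ H := Subgroup.subset_closure (by simp [hS])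
  have hcomm : ∀ x ∈ H, ∀ y ∈ H, Commute x y := by
    intro x hx y hy
    refine Subgroup.closure_induction₂ (p := fun x y _ _ => Commute x y) ?_ ?_ ?_ ?_ ?_ ?_ ?_ hx hy
    · rintro x y (rfl | rfl) (rfl | rfl)
      exacts [Commute.refl _, h, h.symm, Commute.refl _]
    · exact fun x _ => Commute.one_left x
    · exact fun x _ => Commute.one_right x
    · exact fun x y z _ _ _ h1 h2 => h1.mul_left h2
    · exact fun y z x _ _ _ h1 h2 => h1.mul_right h2
    · exact fun x y _ _ h1 => h1.inv_left
    · exact fun x y _ _ h1 => h1.inv_right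
  set b := IsFreeGroup.basis ↥H with hb
  set e := b.repr with he
  have hsub : Subsingleton (IsFreeGroup.Generators ↥H) := by
    constructor
    intro u v
    have h1 : Commute ((b u : H) : FreeGroup (Fin 2)) ((b v : H) : FreeGroup (Fin 2)) :=
      hcomm _ (b u : H).2 _ (b v : H).2
    have h2 : (b u : H) * b v = b v * b u := Subtype.ext (by simpa using h1.eq)
    have h3 := congrArg e h2
    rw [map_mul, map_mul, he, FreeGroupBasis.repr_apply_coe, FreeGroupBasis.repr_apply_coe] at h3
    exact eq_of_commute_of h3
  rcases isEmpty_or_nonempty (IsFreeGroup.Generators ↥H) with hemp | hne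
  · have key : ∀ (W : FreeGroup (Fin 2)) (hW : W ∈ H), W = 1 := by
      intro W hW
      have h1 : e ⟨W, hW⟩ = e 1 := by
        rw [freeGroup_eq_one_of_isEmpty (e ⟨W, hW⟩), map_one]
      exact congrArg Subtype.val (e.injective h1)
    exact ⟨1, 0, 0, by simp [key X hXH], by simp [key Y hYH]⟩
  · obtain ⟨g₀⟩ := hne
    set c : FreeGroup (Fin 2) := ((e.symm (FreeGroup.of g₀) : H) : FreeGroup (Fin 2)) with hc
    obtain ⟨za, ha⟩ := freeGroup_zpow_of_subsingleton g₀ (e ⟨X, hXH⟩)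
    obtain ⟨zb, hb'⟩ := freeGroup_zpow_of_subsingleton g₀ (e ⟨Y, hYH⟩)
    refine ⟨c, za, zb, ?_, ?_⟩
    · have h1 : (⟨X, hXH⟩ : H) = (e.symm (FreeGroup.of g₀)) ^ za := by
        apply e.injective; rw [ha, map_zpow, MulEquiv.apply_symm_apply]
      calc X = ((⟨X, hXH⟩ : H) : FreeGroup (Fin 2)) := rfl
        _ = c ^ za := by rw [h1, hc]; exact SubgroupClass.coe_zpow _ _
    · have h1 : (⟨Y, hYH⟩ : H) = (e.symm (FreeGroup.of g₀)) ^ zb := by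
        apply e.injective; rw [hb', map_zpow, MulEquiv.apply_symm_apply]
      calc Y = ((⟨Y, hYH⟩ : H) : FreeGroup (Fin 2)) := rfl
        _ = c ^ zb := by rw [h1, hc]; exact SubgroupClass.coe_zpow _ _

namespace Heis
@[simp] lemma alphaH_a : alphaH.a = 1 := rfl
@[simp] lemma alphaH_b : alphaH.b = 0 := rfl
@[simp] lemma alphaH_c : alphaH.c = 0 := rfl
@[simp] lemma betaH_a : betaH.a = 0 := rfl
@[simp] lemma betaH_b : betaH.b = 1 := rfl
@[simp] lemma betaH_c : betaH.c = 0 := rfl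
end Heis

/-- The test homomorphism to the Heisenberg group. -/
def psi2 : FreeGroup (Fin 2) →* Heis := FreeGroup.lift ![alphaH, betaH]

lemma psi2_of0 : psi2 (FreeGroup.of 0) = alphaH := by
  simp [psi2]

lemma psi2_of1 : psi2 (FreeGroup.of 1) = betaH := by
  simp [psi2]

lemma not_commute_of01 : ¬ Commute (FreeGroup.of 0 : FreeGroup (Fin 2)) (FreeGroup.of 1) := by
  intro h
  have h2 := congrArg psi2 h.eq
  rw [map_mul, map_mul, psi2_of0, psi2_of1] at h2
  exact alpha_beta_ne h2

lemma heis_coords_of_mem_closure {C T z : Heis}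
    (hz : z ∈ Subgroup.closure ({C, T} : Set Heis)) :
    ∃ m n : ℤ, z.a = m * C.a + n * T.a ∧ z.b = m * C.b + n * T.b := by
  induction hz using Subgroup.closure_induction with
  | mem w hw =>
    rcases hw with rfl | rfl
    · exact ⟨1, 0, by ring, by ring⟩
    · exact ⟨0, 1, by ring, by ring⟩
  | one => exact ⟨0, 0, by simp, by simp⟩
  | mul x y hx hy ihx ihy =>
    obtain ⟨m1, n1, p1, q1⟩ := ihx
    obtain ⟨m2, n2, p2, q2⟩ := ihy
    exact ⟨m1 + m2, n1 + n2, by simp [p1, p2]; ring, by simp [q1, q2]; ring⟩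
  | inv x hx ihx =>
    obtain ⟨m1, n1, p1, q1⟩ := ihx
    exact ⟨-m1, -n1, by simp [p1]; ring, by simp [q1]; ring⟩

/-- Generators `x, y, t`. -/
def x8 : FreeGroup (Fin 3) := FreeGroup.of 0
def y8 : FreeGroup (Fin 3) := FreeGroup.of 1
def t8 : FreeGroup (Fin 3) := FreeGroup.of 2

/-- Relators `xy = yx`, `t xⁱ t⁻¹ = xʲ yᵏ`. -/
def rels8 (i j k : ℤ) : Set (FreeGroup (Fin 3)) :=
  {x8 * y8 * (y8 * x8)⁻¹, t8 * x8 ^ i * t8⁻¹ * (x8 ^ j * y8 ^ k)⁻¹}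

/-- Part of Proposition 4.1: the single-self-loop tubular group
`⟨x, y, t | [x,y], t xⁱ t⁻¹ = xʲyᵏ⟩` surjects the free group `F₂` iff `k = 0`. -/
theorem self_loop_surjects_F2_iff (i j k : ℤ) (hi : i ≠ 0) (hjk : (j, k) ≠ (0, 0)) :
    (∃ f : PresentedGroup (rels8 i j k) →* FreeGroup (Fin 2), Function.Surjective f) ↔
      k = 0 := by
  constructor
  · rintro ⟨f, hf⟩
    by_contra hk
    have hrel : ∀ r ∈ rels8 i j k, PresentedGroup.mk (rels8 i j k) r = 1 := fun r hr =>
      (QuotientGroup.eq_one_iff r).mpr (Subgroup.subset_normalClosure hr)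
    set X := f (PresentedGroup.mk (rels8 i j k) x8) with hX
    set Y := f (PresentedGroup.mk (rels8 i j k) y8) with hY
    set T := f (PresentedGroup.mk (rels8 i j k) t8) with hT
    have hXY : Commute X Y := by
      have h1 := hrel (x8 * y8 * (y8 * x8)⁻¹) (Set.mem_insert _ _)
      rw [map_mul, map_inv, map_mul, map_mul, mul_inv_eq_one] at h1
      have h2 := congrArg f h1
      rw [map_mul, map_mul] at h2
      exact h2
    have hrel2 : T * X ^ i * T⁻¹ = X ^ j * Y ^ k := by
      have h1 := hrel (t8 * x8 ^ i * t8⁻¹ * (x8 ^ j * y8 ^ k)⁻¹)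
        (Set.mem_insert_iff.mpr (Or.inr rfl))
      simp only [map_mul, map_inv, map_zpow] at h1
      rw [mul_inv_eq_one] at h1
      have h2 := congrArg f h1
      simpa only [map_mul, map_inv, map_zpow] using h2
    have htop : Subgroup.closure ({X, Y, T} : Set (FreeGroup (Fin 2))) = ⊤ := by
      rw [eq_top_iff]
      rintro g -
      obtain ⟨p, rfl⟩ := hf g
      induction p using PresentedGroup.induction_on with
      | H z =>
        induction z using FreeGroup.induction_on with
        | C1 => simpa using one_mem _
        | of v =>
          fin_cases v
          · exact Subgroup.subset_closure (Or.inl rfl)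
          · exact Subgroup.subset_closure (Or.inr (Or.inl rfl))
          · exact Subgroup.subset_closure (Or.inr (Or.inr rfl))
        | inv_of v hv => rw [map_inv, map_inv]; exact inv_mem hv
        | mul u w hu hw => rw [map_mul, map_mul]; exact mul_mem hu hw
    obtain ⟨c, a, b, hXc, hYc⟩ := common_root hXY
    have hctop : Subgroup.closure ({c, T} : Set (FreeGroup (Fin 2))) = ⊤ := by
      rw [eq_top_iff, ← htop, Subgroup.closure_le]
      rintro g (rfl | rfl | rfl)
      · rw [hXc]; exact zpow_mem (Subgroup.subset_closure (Set.mem_insert _ _)) a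
      · rw [hYc]; exact zpow_mem (Subgroup.subset_closure (Set.mem_insert _ _)) b
      · exact Subgroup.subset_closure (Set.mem_insert_iff.mpr (Or.inr rfl))
    set C := psi2 c with hC
    set TT := psi2 T with hTT
    have hmap : Subgroup.closure ({C, TT} : Set Heis) = Subgroup.map psi2 ⊤ := by
      rw [← hctop, MonoidHom.map_closure, Set.image_pair]
    have halpha : alphaH ∈ Subgroup.closure ({C, TT} : Set Heis) := by
      rw [hmap]; exact ⟨FreeGroup.of 0, trivial, psi2_of0⟩
    have hbeta : betaH ∈ Subgroup.closure ({C, TT} : Set Heis) := by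
      rw [hmap]; exact ⟨FreeGroup.of 1, trivial, psi2_of1⟩
    obtain ⟨u₁, v₁, e11, e12⟩ := heis_coords_of_mem_closure halpha
    obtain ⟨u₂, v₂, e21, e22⟩ := heis_coords_of_mem_closure hbeta
    rw [Heis.alphaH_a] at e11
    rw [Heis.alphaH_b] at e12
    rw [Heis.betaH_a] at e21
    rw [Heis.betaH_b] at e22
    have hdet : (C.a * TT.b - C.b * TT.a) * (u₁ * v₂ - u₂ * v₁) = 1 := by
      have expand : (C.a * TT.b - C.b * TT.a) * (u₁ * v₂ - u₂ * v₁)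
          = (u₁ * C.a + v₁ * TT.a) * (u₂ * C.b + v₂ * TT.b)
            - (u₁ * C.b + v₁ * TT.b) * (u₂ * C.a + v₂ * TT.a) := by ring
      rw [expand, ← e11, ← e12, ← e21, ← e22]
      norm_num
    have hR0 : T * c ^ (a * i) * T⁻¹ = c ^ (a * j + b * k) := by
      rw [zpow_add, zpow_mul, zpow_mul, zpow_mul, ← hXc, ← hYc]
      exact hrel2
    have hR : TT * C ^ (a * i) * TT⁻¹ = C ^ (a * j + b * k) := by
      have h2 := congrArg psi2 hR0
      simpa only [map_mul, map_inv, map_zpow] using h2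
    have hca := congrArg Heis.a hR
    have hcb := congrArg Heis.b hR
    simp only [Heis.mul_a, Heis.mul_b, Heis.inv_a, Heis.inv_b] at hca hcb
    rw [(Heis.zpow_a C (a * i)).1, (Heis.zpow_a C (a * j + b * k)).1] at hca
    rw [(Heis.zpow_a C (a * i)).2, (Heis.zpow_a C (a * j + b * k)).2] at hcb
    have hma : (a * i) * C.a = (a * j + b * k) * C.a := by linear_combination hca
    have hmb : (a * i) * C.b = (a * j + b * k) * C.b := by linear_combination hcb
    have hCab : ¬(C.a = 0 ∧ C.b = 0) := by
      rintro ⟨h1, h2⟩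
      rw [h1, h2] at hdet
      simp at hdet
    have hmn : a * i = a * j + b * k := by
      rcases not_and_or.mp hCab with h1 | h1
      · exact mul_right_cancel₀ h1 hma
      · exact mul_right_cancel₀ h1 hmb
    by_cases ha0 : a = 0
    · have hbk : b * k = 0 := by rw [ha0] at hmn; linarith
      have hb0 : b = 0 := by
        rcases mul_eq_zero.mp hbk with h | h
        · exact h
        · exact absurd h hk
      have hX1 : X = 1 := by rw [hXc, ha0, zpow_zero]
      have hY1 : Y = 1 := by rw [hYc, hb0, zpow_zero]
      have hTtop : (⊤ : Subgroup (FreeGroup (Fin 2))) ≤ Subgroup.zpowers T := by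
        rw [← htop, Subgroup.closure_le]
        rintro g (rfl | rfl | rfl)
        · rw [hX1]; exact one_mem _
        · rw [hY1]; exact one_mem _
        · exact Subgroup.mem_zpowers T
      obtain ⟨z1, hz1⟩ := hTtop (Subgroup.mem_top (FreeGroup.of 0))
      obtain ⟨z2, hz2⟩ := hTtop (Subgroup.mem_top (FreeGroup.of 1))
      apply not_commute_of01
      rw [← hz1, ← hz2]
      exact (Commute.refl T).zpow_zpow z1 z2
    · have hm0 : a * i ≠ 0 := mul_ne_zero ha0 hi
      rw [← hmn] at hR
      rw [mul_inv_eq_iff_eq_mul] at hR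
      have h3 := congrArg Heis.c hR
      simp only [Heis.mul_c, Heis.mul_a, Heis.mul_b] at h3
      rw [(Heis.zpow_a C (a * i)).1, (Heis.zpow_a C (a * i)).2] at h3
      have h5 : (a * i) * (TT.a * C.b - C.a * TT.b) = 0 := by linear_combination h3
      have h4 : C.a * TT.b - C.b * TT.a = 0 := by
        rcases mul_eq_zero.mp h5 with h | h
        · exact absurd h hm0
        · linear_combination -h
      rw [h4] at hdet
      simp at hdet
  · rintro rfl
    classical
    have hcheck : ∀ r ∈ rels8 i j 0,
        FreeGroup.lift (![1, FreeGroup.of 0, FreeGroup.of 1] : Fin 3 → FreeGroup (Fin 2)) r = 1 := by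
      intro r hr
      simp only [rels8, Set.mem_insert_iff, Set.mem_singleton_iff] at hr
      rcases hr with rfl | rfl
      · simp [x8, y8, FreeGroup.lift_apply_of]
      · simp [x8, y8, t8, FreeGroup.lift_apply_of]
    refine ⟨PresentedGroup.toGroup hcheck, ?_⟩
    intro g
    induction g using FreeGroup.induction_on with
    | C1 => exact ⟨1, map_one _⟩
    | of v =>
      fin_cases v
      · exact ⟨PresentedGroup.of 1, by rw [PresentedGroup.toGroup.of]; simp⟩
      · exact ⟨PresentedGroup.of 2, by rw [PresentedGroup.toGroup.of]; simp⟩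
    | inv_of v hv =>
      obtain ⟨p, hp⟩ := hv
      exact ⟨p⁻¹, by rw [map_inv, hp]⟩
    | mul u w hu hw =>
      obtain ⟨p, hp⟩ := hu
      obtain ⟨q, hq⟩ := hw
      exact ⟨p * q, by rw [map_mul, hp, hq]⟩
end
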